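/- arXiv:1604.08510 — 6 statements merged into one kernel-verified Lean document; each statement's English description precedes it below -/
import Mathlib

section
/- Let $n$ be a nonzero integer and let $p$ be an odd prime not dividing $n$. Then $\sigma_p = 1 - \tfrac{3}{2}p^{-2} + \tfrac{1}{2}p^{-3}$, i.e. the Haar probability measure of the set of triples $(a,b,c) \in \mathbb{Z}_p^3$ for which $a x^2 + b y^2 + c z^2 = n$ has a solution in $\mathbb{Z}_p^3$ equals $1 - \tfrac{3}{2}p^{-2} + \tfrac{1}{2}p^{-3}$. -/
open MeasureTheory TopologicalSpace Filter

noncomputable section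

instance padicMS (p : ℕ) [Fact p.Prime] : MeasurableSpace (ℤ_[p] × ℤ_[p] × ℤ_[p]) := borel _
instance padicBS (p : ℕ) [Fact p.Prime] : BorelSpace (ℤ_[p] × ℤ_[p] × ℤ_[p]) := ⟨rfl⟩

/-- The Haar probability measure on `ℤ_p × ℤ_p × ℤ_p`, normalised so that the
total space has measure `1`. -/
def padicHaar (p : ℕ) [Fact p.Prime] : Measure (ℤ_[p] × ℤ_[p] × ℤ_[p]) :=
  Measure.addHaarMeasure ⊤

/-- `Ω_p`: the set of triples `(a,b,c) ∈ ℤ_p³` such that `a x² + b y² + c z² = n`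
has a solution `(x,y,z) ∈ ℤ_p³`. -/
def Omega (p : ℕ) [Fact p.Prime] (n : ℤ) : Set (ℤ_[p] × ℤ_[p] × ℤ_[p]) :=
  {t | ∃ x y z : ℤ_[p], t.1 * x ^ 2 + t.2.1 * y ^ 2 + t.2.2 * z ^ 2 = (n : ℤ_[p])}

/-! ### Auxiliary lemmas -/

open scoped ENNReal
open Finset Polynomial

section CountingAux

theorem aux_binrep (p : ℕ) [hp : Fact p.Prime] (hp2 : p ≠ 2) (α β m : ZMod p) (hα : α ≠ 0)
    (hβ : β ≠ 0) : ∃ x y : ZMod p, α * x ^ 2 + β * y ^ 2 = m := by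
  have hcard : Fintype.card (ZMod p) % 2 = 1 := by
    rw [ZMod.card]; exact Nat.Prime.eq_two_or_odd hp.1 |>.resolve_left hp2
  have hf : degree (C α * X ^ 2 : (ZMod p)[X]) = 2 := by
    rw [degree_C_mul_X_pow _ hα]; rfl
  have hg : degree (C β * X ^ 2 - C m : (ZMod p)[X]) = 2 := by
    rw [degree_sub_eq_left_of_degree_lt, degree_C_mul_X_pow _ hβ]
    · rfl
    · rw [degree_C_mul_X_pow _ hβ]
      exact lt_of_le_of_lt degree_C_le (by decide)
  obtain ⟨a, b, hab⟩ := FiniteField.exists_root_sum_quadratic hf hg hcard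
  refine ⟨a, b, ?_⟩
  simp only [eval_add, eval_mul, eval_pow, eval_C, eval_X, eval_sub] at hab
  linear_combination hab

theorem aux_nonsq_mul_nonsq (p : ℕ) [Fact p.Prime] {u v : ZMod p} (hu : ¬IsSquare u)
    (hv : ¬IsSquare v) : IsSquare (u * v) := by
  have hu0 : u ≠ 0 := fun h => hu (h ▸ ⟨0, by simp⟩)
  have hv0 : v ≠ 0 := fun h => hv (h ▸ ⟨0, by simp⟩)
  have h1 := quadraticChar_neg_one_iff_not_isSquare.mpr hu
  have h2 := quadraticChar_neg_one_iff_not_isSquare.mpr hv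
  rw [← quadraticChar_one_iff_isSquare (mul_ne_zero hu0 hv0), map_mul, h1, h2]
  ring

theorem aux_unit_count (p : ℕ) [hp : Fact p.Prime] (hp2 : p ≠ 2) (m : ZMod p) (hm : m ≠ 0)
    [DecidablePred (fun α : ZMod p => α ≠ 0 ∧ ¬∃ x, α * x ^ 2 = m)] :
    2 * (univ.filter (fun α : ZMod p => α ≠ 0 ∧ ¬∃ x, α * x ^ 2 = m)).card + 1 = p := by
  classical
  obtain ⟨g, hg⟩ := FiniteField.exists_nonsquare (F := ZMod p)
    (by rw [ZMod.ringChar_zmod_n]; exact hp2)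
  have hg0 : g ≠ 0 := fun h => hg (h ▸ ⟨0, by simp⟩)
  have hBc : (univ.filter (fun α : ZMod p => α ≠ 0 ∧ ¬∃ x, α * x ^ 2 = m)).card =
      (univ.filter (fun α : ZMod p => (α ≠ 0 ∧ ¬∃ x, α * x ^ 2 = m))).card := by
    congr 1
  rw [hBc]
  set Bad := univ.filter (fun α : ZMod p => α ≠ 0 ∧ ¬∃ x, α * x ^ 2 = m) with hBad
  set Good := univ.filter (fun α : ZMod p => ∃ x, α * x ^ 2 = m) with hGood
  have key : Good.card = Bad.card := by
    apply Finset.card_bij' (fun α _ => g * α) (fun α _ => g⁻¹ * α)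
    · intro α hα
      simp only [hGood, mem_filter, mem_univ, true_and] at hα
      obtain ⟨x, hx⟩ := hα
      have hα0 : α ≠ 0 := by rintro rfl; simp at hx; exact hm hx.symm
      simp only [hBad, mem_filter, mem_univ, true_and]
      refine ⟨mul_ne_zero hg0 hα0, ?_⟩
      rintro ⟨w, hw⟩
      have hw0 : w ≠ 0 := by rintro rfl; simp at hw; exact hm hw.symm
      apply hg
      have hkey : g * w ^ 2 = x ^ 2 :=
        mul_left_cancel₀ hα0 (by linear_combination hw.trans hx.symm)
      exact ⟨x * w⁻¹, by field_simp; linear_combination hkey⟩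
    · intro α hα
      simp only [hBad, mem_filter, mem_univ, true_and] at hα
      obtain ⟨hα0, hns⟩ := hα
      simp only [hGood, mem_filter, mem_univ, true_and]
      have hu : ¬IsSquare (m * α⁻¹) := by
        rintro ⟨t, ht⟩
        exact hns ⟨t, by rw [sq, ← ht]; field_simp⟩
      obtain ⟨s, hs⟩ := aux_nonsq_mul_nonsq p hu hg
      field_simp at hs
      refine ⟨s, ?_⟩
      field_simp
      linear_combination -hs
    · intro α hα; field_simp
    · intro α hα; field_simp
  have hpart : Good ∪ Bad = univ.erase 0 := by
    ext α
    simp only [hGood, hBad, mem_union, mem_filter, mem_univ, true_and, mem_erase]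
    constructor
    · rintro (⟨x, hx⟩ | ⟨h0, _⟩)
      · exact ⟨fun h => hm (by rw [h] at hx; simpa using hx.symm), trivial⟩
      · exact ⟨h0, trivial⟩
    · rintro ⟨h0, -⟩
      by_cases h : ∃ x, α * x ^ 2 = m
      · exact Or.inl h
      · exact Or.inr ⟨h0, h⟩
  have hdisj : Disjoint Good Bad := by
    rw [Finset.disjoint_left]
    intro α hα hβ
    simp only [hGood, mem_filter, mem_univ, true_and] at hα
    simp only [hBad, mem_filter, mem_univ, true_and] at hβ
    exact hβ.2 hα
  have hcard : Good.card + Bad.card = p - 1 := by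
    rw [← Finset.card_union_of_disjoint hdisj, hpart, Finset.card_erase_of_mem (mem_univ _),
      Finset.card_univ, ZMod.card]
  have hp1 : 1 ≤ p := hp.1.one_lt.le.trans' (by norm_num)
  omega

theorem aux_triple_count (p : ℕ) [hp : Fact p.Prime] (hp2 : p ≠ 2) (m : ZMod p) (hm : m ≠ 0)
    [DecidablePred (fun t : ZMod p × ZMod p × ZMod p =>
      ∃ x y z, t.1 * x ^ 2 + t.2.1 * y ^ 2 + t.2.2 * z ^ 2 = m)] :
    2 * (univ.filter (fun t : ZMod p × ZMod p × ZMod p =>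
      ∃ x y z, t.1 * x ^ 2 + t.2.1 * y ^ 2 + t.2.2 * z ^ 2 = m)).card + 3 * p
      = 2 * p ^ 3 + 1 := by
  classical
  have hGc : (univ.filter (fun t : ZMod p × ZMod p × ZMod p =>
      ∃ x y z, t.1 * x ^ 2 + t.2.1 * y ^ 2 + t.2.2 * z ^ 2 = m)).card =
      (univ.filter (fun t : ZMod p × ZMod p × ZMod p =>
      (∃ x y z, t.1 * x ^ 2 + t.2.1 * y ^ 2 + t.2.2 * z ^ 2 = m))).card := by
    congr 1
  rw [hGc]
  set B1 := univ.filter (fun α : ZMod p => α ≠ 0 ∧ ¬∃ x, α * x ^ 2 = m) with hB1def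
  have h1 : 2 * B1.card + 1 = p := aux_unit_count p hp2 m hm
  set G := univ.filter (fun t : ZMod p × ZMod p × ZMod p =>
      ∃ x y z, t.1 * x ^ 2 + t.2.1 * y ^ 2 + t.2.2 * z ^ 2 = m) with hG
  have hGB : G.card + Gᶜ.card = p ^ 3 := by
    rw [Finset.card_add_card_compl, Fintype.card_prod, Fintype.card_prod, ZMod.card]
    ring
  have hBeq : Gᶜ = (({((0 : ZMod p), (0 : ZMod p), (0 : ZMod p))} ∪
      B1.image (fun α => (α, 0, 0))) ∪ B1.image (fun β => ((0 : ZMod p), β, 0))) ∪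
      B1.image (fun γ => ((0 : ZMod p), (0 : ZMod p), γ)) := by
    ext ⟨a, b, c⟩
    simp only [Finset.mem_compl, hG, mem_filter, mem_univ, true_and, mem_union, mem_singleton,
      mem_image, Prod.mk.injEq, hB1def]
    constructor
    · intro hns
      by_cases ha : a = 0 <;> by_cases hb : b = 0 <;> by_cases hc : c = 0
      · exact Or.inl (Or.inl (Or.inl ⟨ha, hb, hc⟩))
      · refine Or.inr ⟨c, ⟨hc, fun ⟨x, hx⟩ => hns ⟨0, 0, x, by subst ha hb; simpa using hx⟩⟩,
          ha.symm, hb.symm, rfl⟩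
      · refine Or.inl (Or.inr ⟨b, ⟨hb, fun ⟨x, hx⟩ => hns ⟨0, x, 0, by subst ha hc; simpa using hx⟩⟩,
          ha.symm, rfl, hc.symm⟩)
      · obtain ⟨x, y, hxy⟩ := aux_binrep p hp2 b c m hb hc
        exact absurd ⟨0, x, y, by subst ha; simpa using hxy⟩ hns
      · refine Or.inl (Or.inl (Or.inr ⟨a, ⟨ha, fun ⟨x, hx⟩ => hns ⟨x, 0, 0, by simpa using hx⟩⟩,
          rfl, hb.symm, hc.symm⟩))
      · obtain ⟨x, y, hxy⟩ := aux_binrep p hp2 a c m ha hc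
        exact absurd ⟨x, 0, y, by simpa using hxy⟩ hns
      · obtain ⟨x, y, hxy⟩ := aux_binrep p hp2 a b m ha hb
        exact absurd ⟨x, y, 0, by simpa using hxy⟩ hns
      · obtain ⟨x, y, hxy⟩ := aux_binrep p hp2 a b m ha hb
        exact absurd ⟨x, y, 0, by simpa using hxy⟩ hns
    · rintro (((⟨rfl, rfl, rfl⟩ | ⟨α, ⟨hα, hno⟩, rfl, rfl, rfl⟩) |
        ⟨β, ⟨hβ, hno⟩, rfl, rfl, rfl⟩) | ⟨γ, ⟨hγ, hno⟩, rfl, rfl, rfl⟩) <;>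
        rintro ⟨x, y, z, h⟩
      · simp at h; exact hm h.symm
      · exact hno ⟨x, by simpa using h⟩
      · exact hno ⟨y, by simpa using h⟩
      · exact hno ⟨z, by simpa using h⟩
  have hinj1 : Function.Injective (fun α : ZMod p => ((α, 0, 0) : ZMod p × ZMod p × ZMod p)) := by
    intro a b h; simpa using h
  have hinj2 : Function.Injective
      (fun β : ZMod p => (((0 : ZMod p), β, 0) : ZMod p × ZMod p × ZMod p)) := by
    intro a b h; simpa using h
  have hinj3 : Function.Injective
      (fun γ : ZMod p => (((0 : ZMod p), (0 : ZMod p), γ) : ZMod p × ZMod p × ZMod p)) := by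
    intro a b h; simpa using h
  have hd1 : Disjoint ({((0 : ZMod p), (0 : ZMod p), (0 : ZMod p))} : Finset _)
      (B1.image (fun α => (α, 0, 0))) := by
    simp only [Finset.disjoint_left, mem_singleton, mem_image]
    rintro t rfl ⟨α, hα, h⟩
    simp only [hB1def, mem_filter, mem_univ, true_and] at hα
    exact hα.1 (by simpa using congrArg Prod.fst h)
  have hd2 : Disjoint (({((0 : ZMod p), (0 : ZMod p), (0 : ZMod p))} : Finset _) ∪
      B1.image (fun α => (α, 0, 0))) (B1.image (fun β => ((0 : ZMod p), β, 0))) := by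
    simp only [Finset.disjoint_left, mem_union, mem_singleton, mem_image]
    rintro t (rfl | ⟨α, hα, rfl⟩) ⟨β, hβ, h⟩
    · simp only [hB1def, mem_filter, mem_univ, true_and] at hβ
      exact hβ.1 (by simpa using congrArg (Prod.fst ∘ Prod.snd) h)
    · simp only [hB1def, mem_filter, mem_univ, true_and] at hα
      exact hα.1 (by simpa using (congrArg Prod.fst h).symm)
  have hd3 : Disjoint ((({((0 : ZMod p), (0 : ZMod p), (0 : ZMod p))} : Finset _) ∪
      B1.image (fun α => (α, 0, 0))) ∪ B1.image (fun β => ((0 : ZMod p), β, 0)))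
      (B1.image (fun γ => ((0 : ZMod p), (0 : ZMod p), γ))) := by
    simp only [Finset.disjoint_left, mem_union, mem_singleton, mem_image]
    rintro t ((rfl | ⟨α, hα, rfl⟩) | ⟨β, hβ, rfl⟩) ⟨γ, hγ, h⟩
    · simp only [hB1def, mem_filter, mem_univ, true_and] at hγ
      exact hγ.1 (by simpa using congrArg (Prod.snd ∘ Prod.snd) h)
    · simp only [hB1def, mem_filter, mem_univ, true_and] at hα
      exact hα.1 (by simpa using (congrArg Prod.fst h).symm)
    · simp only [hB1def, mem_filter, mem_univ, true_and] at hβ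
      exact hβ.1 (by simpa using (congrArg (Prod.fst ∘ Prod.snd) h).symm)
  have hcard : Gᶜ.card = 1 + 3 * B1.card := by
    rw [hBeq, Finset.card_union_of_disjoint hd3, Finset.card_union_of_disjoint hd2,
      Finset.card_union_of_disjoint hd1, Finset.card_singleton,
      Finset.card_image_of_injective _ hinj1, Finset.card_image_of_injective _ hinj2,
      Finset.card_image_of_injective _ hinj3]
    ring
  omega

end CountingAux

section PadicAux

variable {p : ℕ} [hp : Fact p.Prime]

theorem aux_toZMod_eq_zero_iff (x : ℤ_[p]) : PadicInt.toZMod x = 0 ↔ ‖x‖ < 1 := by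
  rw [show (PadicInt.toZMod x = 0) ↔ x ∈ RingHom.ker (PadicInt.toZMod (p := p)) from Iff.rfl,
    PadicInt.ker_toZMod, IsLocalRing.mem_maximalIdeal, PadicInt.mem_nonunits]

theorem aux_norm_eq_one_of_toZMod_ne (x : ℤ_[p]) (h : PadicInt.toZMod x ≠ 0) : ‖x‖ = 1 := by
  rcases lt_or_eq_of_le (PadicInt.norm_le_one x) with h1 | h1
  · exact absurd ((aux_toZMod_eq_zero_iff x).mpr h1) h
  · exact h1

theorem aux_toZMod_lift (s : ZMod p) : PadicInt.toZMod ((s.val : ℤ_[p])) = s := by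
  haveI : NeZero p := ⟨hp.1.ne_zero⟩
  rw [map_natCast, ZMod.natCast_val, ZMod.cast_id]

theorem aux_hensel_quad (hp2 : p ≠ 2) (u v x0 : ℤ_[p]) (hu : PadicInt.toZMod u ≠ 0)
    (hx : PadicInt.toZMod x0 ≠ 0) (h0 : PadicInt.toZMod (u * x0 ^ 2 - v) = 0) :
    ∃ x : ℤ_[p], u * x ^ 2 = v := by
  haveI : NeZero p := ⟨hp.1.ne_zero⟩
  have h2 : PadicInt.toZMod (2 : ℤ_[p]) ≠ 0 := by
    rw [show ((2 : ℤ_[p])) = ((2 : ℕ) : ℤ_[p]) by norm_num, map_natCast, Ne,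
      ZMod.natCast_eq_zero_iff]
    exact fun h => hp2 ((Nat.prime_dvd_prime_iff_eq hp.1 Nat.prime_two).mp h)
  set F : Polynomial ℤ_[p] := C u * X ^ 2 - C v with hF
  have hder : F.derivative.eval x0 = 2 * u * x0 := by
    simp [hF]; ring
  have hdernorm : ‖F.derivative.eval x0‖ = 1 := by
    rw [hder, norm_mul, norm_mul, aux_norm_eq_one_of_toZMod_ne _ h2,
      aux_norm_eq_one_of_toZMod_ne _ hu, aux_norm_eq_one_of_toZMod_ne _ hx]
    norm_num
  have heval : F.eval x0 = u * x0 ^ 2 - v := by simp [hF]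
  have hlt : ‖F.eval x0‖ < ‖F.derivative.eval x0‖ ^ 2 := by
    rw [hdernorm, heval, one_pow]
    exact (aux_toZMod_eq_zero_iff _).mp h0
  obtain ⟨z, hz, -⟩ := hensels_lemma hlt
  refine ⟨z, ?_⟩
  have : u * z ^ 2 - v = 0 := by simpa [hF] using hz
  exact sub_eq_zero.mp this

/-- The reduction map `ℤ_p³ → (ZMod p)³`. -/
def redMap (p : ℕ) [Fact p.Prime] : ℤ_[p] × ℤ_[p] × ℤ_[p] → ZMod p × ZMod p × ZMod p :=
  fun t => (PadicInt.toZMod t.1, PadicInt.toZMod t.2.1, PadicInt.toZMod t.2.2)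

theorem aux_lift_first (hp2 : p ≠ 2) (n : ℤ) (a b c : ℤ_[p]) (x y z : ZMod p)
    (hsol : PadicInt.toZMod a * x ^ 2 + PadicInt.toZMod b * y ^ 2 + PadicInt.toZMod c * z ^ 2
      = (n : ZMod p))
    (hterm : PadicInt.toZMod a * x ^ 2 ≠ 0) :
    ∃ X Y Z : ℤ_[p], a * X ^ 2 + b * Y ^ 2 + c * Z ^ 2 = (n : ℤ_[p]) := by
  have ha : PadicInt.toZMod a ≠ 0 := fun h => hterm (by rw [h, zero_mul])
  have hx : x ≠ 0 := fun h => hterm (by rw [h]; ring)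
  have h0 : PadicInt.toZMod (a * (x.val : ℤ_[p]) ^ 2 - ((n : ℤ_[p]) - b * (y.val : ℤ_[p]) ^ 2 -
      c * (z.val : ℤ_[p]) ^ 2)) = 0 := by
    have heq : PadicInt.toZMod (a * (x.val : ℤ_[p]) ^ 2 - ((n : ℤ_[p]) - b * (y.val : ℤ_[p]) ^ 2 -
        c * (z.val : ℤ_[p]) ^ 2)) = PadicInt.toZMod a * x ^ 2 + PadicInt.toZMod b * y ^ 2 +
        PadicInt.toZMod c * z ^ 2 - (n : ZMod p) := by
      push_cast [map_sub, map_add, map_mul, map_pow, map_intCast, aux_toZMod_lift]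
      ring
    rw [heq, hsol, sub_self]
  obtain ⟨X, hX⟩ := aux_hensel_quad hp2 a ((n : ℤ_[p]) - b * (y.val : ℤ_[p]) ^ 2 -
      c * (z.val : ℤ_[p]) ^ 2) ((x.val : ℤ_[p])) ha (by rw [aux_toZMod_lift]; exact hx) h0
  exact ⟨X, (y.val : ℤ_[p]), (z.val : ℤ_[p]), by linear_combination hX⟩

theorem aux_omega_eq (hp2 : p ≠ 2) (n : ℤ) (hpn : ¬ (p : ℤ) ∣ n) :
    Omega p n = redMap p ⁻¹'
      {s : ZMod p × ZMod p × ZMod p |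
        ∃ x y z : ZMod p, s.1 * x ^ 2 + s.2.1 * y ^ 2 + s.2.2 * z ^ 2 = (n : ZMod p)} := by
  have hn0 : (n : ZMod p) ≠ 0 := by
    rw [Ne, ZMod.intCast_zmod_eq_zero_iff_dvd]; exact hpn
  ext ⟨a, b, c⟩
  simp only [Omega, redMap, Set.mem_setOf_eq, Set.mem_preimage]
  constructor
  · rintro ⟨x, y, z, h⟩
    exact ⟨PadicInt.toZMod x, PadicInt.toZMod y, PadicInt.toZMod z, by
      have := congrArg PadicInt.toZMod h
      simpa only [map_add, map_mul, map_pow, map_intCast] using this⟩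
  · rintro ⟨x, y, z, h⟩
    by_cases h1 : PadicInt.toZMod a * x ^ 2 ≠ 0
    · exact aux_lift_first hp2 n a b c x y z h h1
    by_cases h2 : PadicInt.toZMod b * y ^ 2 ≠ 0
    · obtain ⟨X, Y, Z, hXYZ⟩ := aux_lift_first hp2 n b a c y x z (by linear_combination h) h2
      exact ⟨Y, X, Z, by linear_combination hXYZ⟩
    by_cases h3 : PadicInt.toZMod c * z ^ 2 ≠ 0
    · obtain ⟨X, Y, Z, hXYZ⟩ := aux_lift_first hp2 n c a b z x y (by linear_combination h) h3
      exact ⟨Y, Z, X, by linear_combination hXYZ⟩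
    push_neg at h1 h2 h3
    rw [h1, h2, h3] at h
    simp at h
    exact absurd h.symm hn0

end PadicAux

section MeasureAux

variable {p : ℕ} [hp : Fact p.Prime]

instance : (padicHaar p).IsAddLeftInvariant :=
  Measure.isAddLeftInvariant_addHaarMeasure ⊤

theorem aux_redMap_add (s t : ℤ_[p] × ℤ_[p] × ℤ_[p]) :
    redMap p (s + t) = redMap p s + redMap p t := by
  simp only [redMap, Prod.fst_add, Prod.snd_add, map_add, Prod.mk_add_mk]

theorem aux_isOpen_fiber (s : ZMod p × ZMod p × ZMod p) :
    IsOpen (redMap p ⁻¹' {s}) := by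
  have hK : IsOpen (redMap p ⁻¹' {(0 : ZMod p × ZMod p × ZMod p)}) := by
    have : redMap p ⁻¹' {(0 : ZMod p × ZMod p × ZMod p)} =
        {t : ℤ_[p] × ℤ_[p] × ℤ_[p] | ‖t.1‖ < 1} ∩ {t | ‖t.2.1‖ < 1} ∩ {t | ‖t.2.2‖ < 1} := by
      ext t
      simp only [redMap, Set.mem_preimage, Set.mem_singleton_iff, Prod.ext_iff, Prod.fst_zero,
        Prod.snd_zero, Set.mem_inter_iff, Set.mem_setOf_eq, aux_toZMod_eq_zero_iff]
      tauto
    rw [this]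
    refine ((IsOpen.inter ?_ ?_).inter ?_)
    · exact isOpen_lt (continuous_norm.comp continuous_fst) continuous_const
    · exact isOpen_lt (continuous_norm.comp (continuous_fst.comp continuous_snd)) continuous_const
    · exact isOpen_lt (continuous_norm.comp (continuous_snd.comp continuous_snd)) continuous_const
  haveI : NeZero p := ⟨hp.1.ne_zero⟩
  set ts : ℤ_[p] × ℤ_[p] × ℤ_[p] := ((s.1.val : ℤ_[p]), (s.2.1.val : ℤ_[p]), (s.2.2.val : ℤ_[p]))
  have hts : redMap p ts = s := by
    show ((PadicInt.toZMod _, PadicInt.toZMod _, PadicInt.toZMod _) :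
      ZMod p × ZMod p × ZMod p) = s
    rw [aux_toZMod_lift, aux_toZMod_lift, aux_toZMod_lift]
  have : redMap p ⁻¹' {s} = (fun w => w - ts) ⁻¹' (redMap p ⁻¹' {0}) := by
    ext w
    simp only [Set.mem_preimage, Set.mem_singleton_iff]
    constructor
    · intro h
      have := aux_redMap_add (w - ts) ts
      rw [sub_add_cancel, h, ← hts] at this
      have h2 := congrArg (· - redMap p ts) this
      simpa using h2.symm
    · intro h
      have := aux_redMap_add (w - ts) ts
      rw [sub_add_cancel, h, zero_add, hts] at this
      exact this
  rw [this]
  exact hK.preimage (continuous_id.sub continuous_const)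

theorem aux_measure_fiber (s : ZMod p × ZMod p × ZMod p) :
    padicHaar p (redMap p ⁻¹' {s}) = padicHaar p (redMap p ⁻¹' {0}) := by
  haveI : NeZero p := ⟨hp.1.ne_zero⟩
  set ts : ℤ_[p] × ℤ_[p] × ℤ_[p] := ((s.1.val : ℤ_[p]), (s.2.1.val : ℤ_[p]), (s.2.2.val : ℤ_[p]))
  have hts : redMap p ts = s := by
    show ((PadicInt.toZMod _, PadicInt.toZMod _, PadicInt.toZMod _) :
      ZMod p × ZMod p × ZMod p) = s
    rw [aux_toZMod_lift, aux_toZMod_lift, aux_toZMod_lift]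
  have key : (fun w => ts + w) ⁻¹' (redMap p ⁻¹' {s}) = redMap p ⁻¹' {0} := by
    ext w
    simp only [Set.mem_preimage, Set.mem_singleton_iff, aux_redMap_add, hts]
    constructor
    · intro h
      have := congrArg (· - s) h
      simpa using this
    · intro h; rw [h, add_zero]
  rw [← key, measure_preimage_add]

theorem aux_measure_preimage_finset (S : Finset (ZMod p × ZMod p × ZMod p)) :
    padicHaar p (redMap p ⁻¹' ↑S) = S.card * padicHaar p (redMap p ⁻¹' {0}) := by
  have hmeas : ∀ s : ZMod p × ZMod p × ZMod p, MeasurableSet (redMap p ⁻¹' {s}) :=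
    fun s => (aux_isOpen_fiber s).measurableSet
  have hun : redMap p ⁻¹' (↑S : Set _) = ⋃ s ∈ S, redMap p ⁻¹' {s} := by
    ext t; simp
  have hdisj : (↑S : Set (ZMod p × ZMod p × ZMod p)).PairwiseDisjoint
      (fun s => redMap p ⁻¹' {s}) := by
    intro s _ t _ hst
    rw [Function.onFun, Set.disjoint_left]
    rintro w hws hwt
    exact hst ((Set.mem_singleton_iff.mp hws).symm.trans (Set.mem_singleton_iff.mp hwt))
  rw [hun, measure_biUnion_finset hdisj (fun s _ => hmeas s)]
  rw [Finset.sum_congr rfl (fun s _ => aux_measure_fiber s), Finset.sum_const, nsmul_eq_mul]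

theorem aux_measure_zero_fiber :
    padicHaar p (redMap p ⁻¹' {0}) = ((p : ℝ≥0∞) ^ 3)⁻¹ := by
  have htot : padicHaar p Set.univ = 1 := by
    have := Measure.addHaarMeasure_self
      (K₀ := (⊤ : PositiveCompacts (ℤ_[p] × ℤ_[p] × ℤ_[p])))
    rwa [PositiveCompacts.coe_top] at this
  have huniv := aux_measure_preimage_finset (p := p) Finset.univ
  rw [Finset.coe_univ, Set.preimage_univ, htot, Finset.card_univ, Fintype.card_prod,
    Fintype.card_prod, ZMod.card] at huniv
  have hc : ((p * (p * p) : ℕ) : ℝ≥0∞) = (p : ℝ≥0∞) ^ 3 := by push_cast; ring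
  rw [hc] at huniv
  have hp0 : ((p : ℝ≥0∞) ^ 3) ≠ 0 := by
    simp [pow_ne_zero, Nat.cast_ne_zero, hp.1.ne_zero]
  have hptop : ((p : ℝ≥0∞) ^ 3) ≠ ⊤ := by
    simp [ENNReal.pow_ne_top, ENNReal.natCast_ne_top]
  calc padicHaar p (redMap p ⁻¹' {0})
      = ((p : ℝ≥0∞) ^ 3)⁻¹ * ((p : ℝ≥0∞) ^ 3 * padicHaar p (redMap p ⁻¹' {0})) := by
        rw [← mul_assoc, ENNReal.inv_mul_cancel hp0 hptop, one_mul]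
    _ = ((p : ℝ≥0∞) ^ 3)⁻¹ := by rw [← huniv, mul_one]

end MeasureAux

/-- For an odd prime `p` not dividing `n ≠ 0`, the local density
`σ_p = μ_p(Ω_p)` equals `1 - (3/2)p⁻² + (1/2)p⁻³`. -/
theorem stmt1 (n : ℤ) (hn : n ≠ 0) (p : ℕ) [Fact p.Prime] (hp2 : p ≠ 2)
    (hpn : ¬ (p : ℤ) ∣ n) :
    (padicHaar p (Omega p n)).toReal = 1 - 3 / (2 * (p : ℝ) ^ 2) + 1 / (2 * (p : ℝ) ^ 3) := by
  classical
  have hpp : Fact p.Prime := inferInstance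
  have hn0 : (n : ZMod p) ≠ 0 := by
    rw [Ne, ZMod.intCast_zmod_eq_zero_iff_dvd]; exact hpn
  set G : Finset (ZMod p × ZMod p × ZMod p) := Finset.univ.filter
    (fun t => ∃ x y z, t.1 * x ^ 2 + t.2.1 * y ^ 2 + t.2.2 * z ^ 2 = (n : ZMod p)) with hG
  have hset : Omega p n = redMap p ⁻¹' ↑G := by
    rw [aux_omega_eq hp2 n hpn]
    congr 1
    ext s
    simp [hG]
  have hmeasval : padicHaar p (Omega p n) = (G.card : ℝ≥0∞) * ((p : ℝ≥0∞) ^ 3)⁻¹ := by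
    rw [hset, aux_measure_preimage_finset, aux_measure_zero_fiber]
  have hcount : 2 * G.card + 3 * p = 2 * p ^ 3 + 1 := aux_triple_count p hp2 _ hn0
  rw [hmeasval, ENNReal.toReal_mul, ENNReal.toReal_inv]
  have h1 : ((p : ℝ≥0∞) ^ 3).toReal = (p : ℝ) ^ 3 := by
    rw [ENNReal.toReal_pow, ENNReal.toReal_natCast]
  have h2 : ((G.card : ℝ≥0∞)).toReal = (G.card : ℝ) := ENNReal.toReal_natCast _
  rw [h1, h2]
  have hpR : (0 : ℝ) < (p : ℝ) := by exact_mod_cast hpp.1.pos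
  have hcR : (2 : ℝ) * (G.card : ℝ) + 3 * (p : ℝ) = 2 * (p : ℝ) ^ 3 + 1 := by
    exact_mod_cast hcount
  have hpne : (p : ℝ) ≠ 0 := ne_of_gt hpR
  field_simp
  linear_combination hcR
end
end

section
/- Let $n$ be an odd integer (in particular $n \ne 0$). Then $\sigma_2 = 357/512$, i.e. the Haar probability measure of the set of triples $(a,b,c) \in \mathbb{Z}_2^3$ for which $a x^2 + b y^2 + c z^2 = n$ has a solution in $\mathbb{Z}_2^3$ equals $357/512$. -/
open MeasureTheory TopologicalSpace Filter

noncomputable section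

namespace Stmt2Aux

open PadicInt Polynomial ENNReal

noncomputable abbrev f2 : ℤ_[2] →+* ZMod 8 := PadicInt.toZModPow 3

def Odd8 (u : ZMod 8) : Prop := u = 1 ∨ u = 3 ∨ u = 5 ∨ u = 7
instance : DecidablePred Odd8 := fun u => by unfold Odd8; infer_instance
def WSet (b w : ZMod 8) : Prop := w = 0 ∨ w = b ∨ (Odd8 b ∧ w = 4)
instance : ∀ b w, Decidable (WSet b w) := fun b w => by unfold WSet; infer_instance
def Q (nn a b c : ZMod 8) : Prop := Odd8 a ∧ ∃ w : ZMod 8, WSet b w ∧ WSet c (nn - a - w)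
instance : ∀ nn a b c, Decidable (Q nn a b c) := fun nn a b c => by unfold Q; infer_instance
def P (nn a b c : ZMod 8) : Prop := Q nn a b c ∨ Q nn b a c ∨ Q nn c a b
instance : ∀ nn a b c, Decidable (P nn a b c) := fun nn a b c => by unfold P; infer_instance

lemma odd8_of_isUnit {a : ℤ_[2]} (h : IsUnit a) : Odd8 (f2 a) := by
  obtain ⟨u, rfl⟩ := h
  have h1 : f2 ↑u * f2 ↑(u⁻¹) = 1 := by rw [← map_mul, Units.mul_inv, map_one]
  exact (by decide : ∀ s t : ZMod 8, s * t = 1 → Odd8 s) _ _ h1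

lemma isUnit_of_odd8 {a : ℤ_[2]} (h : Odd8 (f2 a)) : IsUnit a := by
  by_contra hu
  have h1 : ‖a‖ < 1 := lt_of_le_of_ne a.norm_le_one (by simpa [PadicInt.isUnit_iff] using hu)
  obtain ⟨t, rfl⟩ := (PadicInt.norm_lt_one_iff_dvd a).mp h1
  have : f2 (((2:ℕ):ℤ_[2]) * t) = 2 * f2 t := by rw [map_mul, map_natCast]; norm_num
  rw [this] at h
  exact (by decide : ∀ t : ZMod 8, ¬ Odd8 (2 * t)) _ h

lemma exists_sqrt {w : ℤ_[2]} (hw : f2 w = 1) : ∃ s : ℤ_[2], s ^ 2 = w := by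
  have hker : w - 1 ∈ RingHom.ker (f2 : ℤ_[2] →+* ZMod 8) := by
    rw [RingHom.mem_ker, map_sub, hw, map_one, sub_self]
  rw [PadicInt.ker_toZModPow] at hker
  have hnorm : ‖w - 1‖ ≤ ((2:ℕ):ℝ) ^ (-(3:ℕ):ℤ) :=
    (PadicInt.norm_le_pow_iff_mem_span_pow (w - 1) 3).mpr hker
  have h2 : ‖(2:ℤ_[2])‖ = 2⁻¹ := by
    have := @PadicInt.norm_p 2 _
    simpa using this
  set F : Polynomial ℤ_[2] := X ^ 2 - C w with hF
  have e1 : F.eval 1 = 1 - w := by simp [hF]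
  have e2 : F.derivative.eval 1 = 2 := by simp [hF]; norm_num
  have hlt : ‖F.eval 1‖ < ‖F.derivative.eval 1‖ ^ 2 := by
    rw [e1, e2, norm_sub_rev, h2]
    calc ‖w - 1‖ ≤ ((2:ℕ):ℝ) ^ (-(3:ℕ):ℤ) := hnorm
      _ < (2⁻¹:ℝ) ^ 2 := by norm_num
  obtain ⟨z, hz, -⟩ := hensels_lemma hlt
  refine ⟨z, ?_⟩
  have : z ^ 2 - w = 0 := by simpa [hF] using hz
  exact sub_eq_zero.mp this

lemma sq_f2_eq_one {x : ℤ_[2]} (h : IsUnit x) : f2 (x ^ 2) = 1 := by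
  rw [map_pow]
  exact (by decide : ∀ u : ZMod 8, Odd8 u → u ^ 2 = 1) _ (odd8_of_isUnit h)

lemma term_cases (b y : ℤ_[2]) : WSet (f2 b) (f2 (b * y ^ 2)) := by
  rcases eq_or_ne y 0 with rfl | hy
  · left; simp
  · have hspec := PadicInt.unitCoeff_spec hy
    set k := y.valuation with hk
    set u := (PadicInt.unitCoeff hy : ℤ_[2]) with hu
    have hmain : f2 (b * y ^ 2) = f2 b * (2:ZMod 8) ^ (2 * k) := by
      have h1 : b * y ^ 2 = b * u ^ 2 * ((2:ℕ):ℤ_[2]) ^ (2 * k) := by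
        rw [hspec]; push_cast; ring
      rw [h1]
      simp [map_mul, map_pow, map_natCast, map_ofNat, sq_f2_eq_one (PadicInt.unitCoeff hy).isUnit,
          (by rw [← map_pow]; exact sq_f2_eq_one (PadicInt.unitCoeff hy).isUnit : f2 u ^ 2 = 1)]
    rcases k with _ | _ | k
    · right; left; simpa using hmain
    · by_cases hb : Odd8 (f2 b)
      · right; right
        refine ⟨hb, ?_⟩
        rw [hmain]
        exact (by decide : ∀ s : ZMod 8, Odd8 s → s * 2 ^ (2*1) = 4) _ hb
      · left
        rw [hmain]
        exact (by decide : ∀ s : ZMod 8, ¬ Odd8 s → s * 2 ^ (2*1) = 0) _ hb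
    · left
      rw [hmain]
      have : (2:ZMod 8) ^ (2 * (k+2)) = 2 ^ (2*k) * (2:ZMod 8)^4 := by ring
      rw [this, (by decide : (2:ZMod 8)^4 = 0), mul_zero, mul_zero]

lemma realize (b : ℤ_[2]) (w : ZMod 8) (hw : WSet (f2 b) w) :
    ∃ y : ℤ_[2], f2 (b * y ^ 2) = w := by
  rcases hw with rfl | rfl | ⟨hb, rfl⟩
  · exact ⟨0, by simp⟩
  · exact ⟨1, by simp⟩
  · refine ⟨2, ?_⟩
    have h1 : b * 2 ^ 2 = 4 * b := by ring
    rw [h1, map_mul, map_ofNat]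
    exact (by decide : ∀ s : ZMod 8, Odd8 s → 4 * s = 4) _ hb

lemma solve_of_Q {nn a b c : ℤ_[2]} (h : Q (f2 nn) (f2 a) (f2 b) (f2 c)) :
    ∃ x y z : ℤ_[2], a * x ^ 2 + b * y ^ 2 + c * z ^ 2 = nn := by
  obtain ⟨ha, w, hwb, hwc⟩ := h
  obtain ⟨y, hy⟩ := realize b w hwb
  obtain ⟨z, hz⟩ := realize c (f2 nn - f2 a - w) hwc
  have hua := isUnit_of_odd8 ha
  set r := nn - b * y ^ 2 - c * z ^ 2 with hr
  have hfr : f2 r = f2 a := by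
    rw [hr, map_sub, map_sub, hy, hz]; ring
  set w' := ((hua.unit⁻¹ : ℤ_[2]ˣ) : ℤ_[2]) * r with hw'
  have haw' : a * w' = r := by
    rw [hw', ← mul_assoc]
    rw [hua.mul_val_inv, one_mul]
  have h1 : f2 w' = 1 := by
    have hmul : f2 a * f2 w' = f2 a := by rw [← map_mul, haw', hfr]
    exact (by decide : ∀ s t : ZMod 8, Odd8 s → s * t = s → t = 1) _ _ ha hmul
  obtain ⟨s, hs⟩ := exists_sqrt h1
  refine ⟨s, y, z, ?_⟩
  have h2 : a * s ^ 2 = r := by rw [hs, haw']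
  rw [h2, hr]; ring

lemma mem_iff {n : ℤ} (hn : Odd n) (a b c : ℤ_[2]) :
    (∃ x y z : ℤ_[2], a * x ^ 2 + b * y ^ 2 + c * z ^ 2 = (n : ℤ_[2])) ↔
      P ((n : ZMod 8)) (f2 a) (f2 b) (f2 c) := by
  have hint : f2 ((n : ℤ_[2])) = (n : ZMod 8) := map_intCast f2 n
  constructor
  · rintro ⟨x, y, z, hxyz⟩
    have hf : f2 (a * x ^ 2) + f2 (b * y ^ 2) + f2 (c * z ^ 2) = (n : ZMod 8) := by
      rw [← map_add, ← map_add, hxyz, hint]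
    have hodd : Odd8 ((n : ZMod 8)) := by
      obtain ⟨m, rfl⟩ := hn
      push_cast
      exact (by decide : ∀ u : ZMod 8, Odd8 (2 * u + 1)) _
    have h3 : Odd8 (f2 (a*x^2)) ∨ Odd8 (f2 (b*y^2)) ∨ Odd8 (f2 (c*z^2)) :=
      (by decide : ∀ s t u : ZMod 8, Odd8 (s + t + u) → Odd8 s ∨ Odd8 t ∨ Odd8 u)
        _ _ _ (hf ▸ hodd)
    have keyo : ∀ {d e : ℤ_[2]}, Odd8 (f2 (d * e ^ 2)) →
        f2 (d * e ^ 2) = f2 d ∧ Odd8 (f2 d) := by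
      intro d e hOdd
      rcases term_cases d e with h0 | h1 | ⟨hd, h4⟩
      · rw [h0] at hOdd; exact absurd hOdd (by decide)
      · exact ⟨h1, h1 ▸ hOdd⟩
      · rw [h4] at hOdd; exact absurd hOdd (by decide)
    rcases h3 with h | h | h
    · obtain ⟨heq, hA⟩ := keyo h
      refine Or.inl ⟨hA, f2 (b * y ^ 2), term_cases b y, ?_⟩
      have : (n : ZMod 8) - f2 a - f2 (b * y ^ 2) = f2 (c * z ^ 2) := by
        rw [← heq]; linear_combination -hf
      rw [this]; exact term_cases c z
    · obtain ⟨heq, hB⟩ := keyo h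
      refine Or.inr (Or.inl ⟨hB, f2 (a * x ^ 2), term_cases a x, ?_⟩)
      have : (n : ZMod 8) - f2 b - f2 (a * x ^ 2) = f2 (c * z ^ 2) := by
        rw [← heq]; linear_combination -hf
      rw [this]; exact term_cases c z
    · obtain ⟨heq, hC⟩ := keyo h
      refine Or.inr (Or.inr ⟨hC, f2 (a * x ^ 2), term_cases a x, ?_⟩)
      have : (n : ZMod 8) - f2 c - f2 (a * x ^ 2) = f2 (b * y ^ 2) := by
        rw [← heq]; linear_combination -hf
      rw [this]; exact term_cases b y
  · rintro (h | h | h)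
    · exact solve_of_Q (by rw [hint]; exact h)
    · obtain ⟨x, y, z, hs⟩ := solve_of_Q (nn := (n:ℤ_[2])) (a := b) (b := a) (c := c)
        (by rw [hint]; exact h)
      exact ⟨y, x, z, by linear_combination hs⟩
    · obtain ⟨x, y, z, hs⟩ := solve_of_Q (nn := (n:ℤ_[2])) (a := c) (b := a) (c := b)
        (by rw [hint]; exact h)
      exact ⟨y, z, x, by linear_combination hs⟩

/-! ### Measure computation -/

def F3 : ℤ_[2] × ℤ_[2] × ℤ_[2] → ZMod 8 × ZMod 8 × ZMod 8 :=
  fun t => (f2 t.1, f2 t.2.1, f2 t.2.2)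

lemma omega_eq {n : ℤ} (hn : Odd n) :
    Omega 2 n = F3 ⁻¹' {v | P ((n : ZMod 8)) v.1 v.2.1 v.2.2} := by
  ext ⟨a, b, c⟩
  simp only [Omega, Set.mem_setOf_eq, Set.mem_preimage, F3]
  exact mem_iff hn a b c

lemma exists_f2_preimage (v : ZMod 8) : ∃ g : ℤ_[2], f2 g = v :=
  ⟨((v.val : ℤ) : ℤ_[2]), by rw [map_intCast]; simp⟩

lemma isClosed_fiber1 (v : ZMod 8) : IsClosed {x : ℤ_[2] | f2 x = v} := by
  obtain ⟨g, rfl⟩ := exists_f2_preimage v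
  have hset : {x : ℤ_[2] | f2 x = f2 g} = {x | ‖x - g‖ ≤ ((2:ℕ):ℝ) ^ (-(3:ℕ):ℤ)} := by
    ext x
    simp only [Set.mem_setOf_eq]
    rw [PadicInt.norm_le_pow_iff_mem_span_pow, ← PadicInt.ker_toZModPow (p := 2) 3,
      RingHom.mem_ker, map_sub, sub_eq_zero]
  rw [hset]
  exact isClosed_le (Continuous.norm (continuous_id.sub continuous_const)) continuous_const

lemma isClosed_fiber (v : ZMod 8 × ZMod 8 × ZMod 8) : IsClosed (F3 ⁻¹' {v}) := by
  have hset : F3 ⁻¹' {v} =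
      {x : ℤ_[2] | f2 x = v.1} ×ˢ ({x : ℤ_[2] | f2 x = v.2.1} ×ˢ {x : ℤ_[2] | f2 x = v.2.2}) := by
    ext ⟨a, b, c⟩
    simp [F3, Prod.ext_iff, and_assoc]
  rw [hset]
  exact (isClosed_fiber1 _).prod ((isClosed_fiber1 _).prod (isClosed_fiber1 _))

lemma F3_add (g x : ℤ_[2] × ℤ_[2] × ℤ_[2]) : F3 (g + x) = F3 g + F3 x := by
  simp [F3, Prod.ext_iff, map_add]

lemma exists_F3_preimage (v : ZMod 8 × ZMod 8 × ZMod 8) :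
    ∃ g : ℤ_[2] × ℤ_[2] × ℤ_[2], F3 g = v := by
  obtain ⟨g1, h1⟩ := exists_f2_preimage v.1
  obtain ⟨g2, h2⟩ := exists_f2_preimage v.2.1
  obtain ⟨g3, h3⟩ := exists_f2_preimage v.2.2
  exact ⟨(g1, g2, g3), by simp [F3, h1, h2, h3]⟩

lemma fiber_measure_eq (v : ZMod 8 × ZMod 8 × ZMod 8) :
    padicHaar 2 (F3 ⁻¹' {v}) = padicHaar 2 (F3 ⁻¹' {0}) := by
  obtain ⟨g, hg⟩ := exists_F3_preimage (-v)
  have hset : F3 ⁻¹' {v} = (fun x => g + x) ⁻¹' (F3 ⁻¹' {0}) := by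
    ext x
    simp only [Set.mem_preimage, Set.mem_singleton_iff, F3_add, hg]
    constructor
    · rintro rfl; abel
    · intro h
      have : F3 x = v := by linear_combination (norm := abel) h
      exact this
  rw [hset, padicHaar]
  exact measure_preimage_add _ g _

lemma fiber_measure_zero : padicHaar 2 (F3 ⁻¹' {(0 : ZMod 8 × ZMod 8 × ZMod 8)}) =
    (512 : ℝ≥0∞)⁻¹ := by
  have huniv : (Set.univ : Set (ℤ_[2] × ℤ_[2] × ℤ_[2])) =
      ⋃ v ∈ (Finset.univ : Finset (ZMod 8 × ZMod 8 × ZMod 8)), F3 ⁻¹' {v} := by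
    ext x
    simp
  have hdisj : ((Finset.univ : Finset (ZMod 8 × ZMod 8 × ZMod 8)) : Set (ZMod 8 × ZMod 8 × ZMod 8)).PairwiseDisjoint
      (fun v => F3 ⁻¹' {v}) := by
    intro u _ v _ huv
    apply Set.disjoint_left.mpr
    rintro x hx hx'
    exact huv (by rw [← hx, ← hx'])
  have hmeas : ∀ v : ZMod 8 × ZMod 8 × ZMod 8, MeasurableSet (F3 ⁻¹' {v}) :=
    fun v => (isClosed_fiber v).measurableSet
  have hsum : padicHaar 2 Set.univ =
      ∑ v : ZMod 8 × ZMod 8 × ZMod 8, padicHaar 2 (F3 ⁻¹' {v}) := by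
    rw [huniv]
    exact measure_biUnion_finset hdisj (fun v _ => hmeas v)
  have hone : padicHaar 2 (Set.univ : Set (ℤ_[2] × ℤ_[2] × ℤ_[2])) = 1 := by
    rw [padicHaar, ← PositiveCompacts.coe_top (α := ℤ_[2] × ℤ_[2] × ℤ_[2])]
    exact Measure.addHaarMeasure_self
  have hconst : ∀ v : ZMod 8 × ZMod 8 × ZMod 8,
      padicHaar 2 (F3 ⁻¹' {v}) = padicHaar 2 (F3 ⁻¹' {0}) := fiber_measure_eq
  rw [hone] at hsum
  simp only [hconst] at hsum
  rw [Finset.sum_const, Finset.card_univ] at hsum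
  have hcard : (Fintype.card (ZMod 8 × ZMod 8 × ZMod 8)) = 512 := by
    rw [Fintype.card_prod, Fintype.card_prod, ZMod.card]
  rw [hcard] at hsum
  have h512 : ((512 : ℕ) : ℝ≥0∞) = (512 : ℝ≥0∞) := by norm_num
  have : (512 : ℝ≥0∞) * padicHaar 2 (F3 ⁻¹' {0}) = 1 := by
    rw [← h512, ← nsmul_eq_mul]
    exact hsum.symm
  calc padicHaar 2 (F3 ⁻¹' {0})
      = (512 : ℝ≥0∞)⁻¹ * ((512 : ℝ≥0∞) * padicHaar 2 (F3 ⁻¹' {0})) := by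
        rw [← mul_assoc, ENNReal.inv_mul_cancel (by norm_num) (by norm_num), one_mul]
    _ = (512 : ℝ≥0∞)⁻¹ := by rw [this, mul_one]

set_option maxHeartbeats 4000000 in
set_option maxRecDepth 40000 in
lemma card_P : ∀ u : ZMod 8,
    (Finset.univ.filter (fun v : ZMod 8 × ZMod 8 × ZMod 8 => P (2*u+1) v.1 v.2.1 v.2.2)).card
      = 357 := by decide

end Stmt2Aux

open Stmt2Aux ENNReal in
/-- For odd `n`, the local density `σ_2 = μ_2(Ω_2)` equals `357/512`. -/
theorem stmt2 (n : ℤ) (hn : Odd n) :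
    (padicHaar 2 (Omega 2 n)).toReal = 357 / 512 := by
  classical
  obtain ⟨m, hm⟩ := hn
  have hm' : Odd n := ⟨m, hm⟩
  set S : Finset (ZMod 8 × ZMod 8 × ZMod 8) :=
    Finset.univ.filter (fun v => P ((n : ZMod 8)) v.1 v.2.1 v.2.2) with hS
  have hOmega : Omega 2 n = ⋃ v ∈ S, F3 ⁻¹' {v} := by
    rw [omega_eq hm']
    ext x
    simp [hS, Set.mem_preimage]
  have hdisj : (S : Set (ZMod 8 × ZMod 8 × ZMod 8)).PairwiseDisjoint (fun v => F3 ⁻¹' {v}) := by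
    intro u _ v _ huv
    apply Set.disjoint_left.mpr
    rintro x hx hx'
    exact huv (by rw [← hx, ← hx'])
  have hmeasure : padicHaar 2 (Omega 2 n) = ∑ v ∈ S, padicHaar 2 (F3 ⁻¹' {v}) := by
    rw [hOmega]
    exact measure_biUnion_finset hdisj (fun v _ => (isClosed_fiber v).measurableSet)
  have hconst : ∀ v ∈ S, padicHaar 2 (F3 ⁻¹' {v}) = (512 : ℝ≥0∞)⁻¹ := by
    intro v _
    rw [fiber_measure_eq, fiber_measure_zero]
  rw [Finset.sum_congr rfl hconst, Finset.sum_const] at hmeasure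
  have hcard : S.card = 357 := by
    have hn8 : (n : ZMod 8) = 2 * (m : ZMod 8) + 1 := by rw [hm]; push_cast; ring
    rw [hS, hn8]
    exact card_P (m : ZMod 8)
  rw [hcard] at hmeasure
  rw [hmeasure]
  rw [nsmul_eq_mul]
  rw [ENNReal.toReal_mul]
  rw [ENNReal.toReal_inv]
  norm_num
end
end

section
/- Let $n$ be a nonzero integer and let $p$ be a prime. Then the set $\Omega_p = \{(a,b,c) \in \mathbb{Z}_p^3 : \exists (x,y,z) \in \mathbb{Z}_p^3,\ a x^2 + b y^2 + c z^2 = n\}$ is both open and closed in $\mathbb{Z}_p^3$ (with the $p$-adic topology); in particular its topological boundary is empty and has Haar measure zero. -/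
open MeasureTheory TopologicalSpace Filter

noncomputable section

open Polynomial in
/-- Hensel-lifting step: if `a x² + r` is a value with `‖a x²‖ ≥ ν`, then after a
small perturbation of `a` and `r` the same value is still attained. -/
lemma hensel_aux {p : ℕ} [Fact p.Prime] {ν : ℝ} (hν : 0 < ν) (hν1 : ν ≤ 1)
    (a a' x r r' : ℤ_[p])
    (hax : ν ≤ ‖a * x ^ 2‖)
    (ha : ‖a' - a‖ < ‖(2 : ℤ_[p])‖ ^ 2 * ν ^ 4 / 2)
    (hr : ‖r' - r‖ < ‖(2 : ℤ_[p])‖ ^ 2 * ν ^ 4 / 2) :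
    ∃ x' : ℤ_[p], a' * x' ^ 2 + r' = a * x ^ 2 + r := by
  have h2 : ‖(2 : ℤ_[p])‖ ≤ 1 := PadicInt.norm_le_one _
  have h2pos : (0:ℝ) < ‖(2 : ℤ_[p])‖ := norm_pos_iff.mpr two_ne_zero
  have hxle : ‖x‖ ≤ 1 := PadicInt.norm_le_one _
  have hale : ‖a‖ ≤ 1 := PadicInt.norm_le_one _
  have hx2 : ‖x‖ ^ 2 ≤ 1 := by nlinarith [norm_nonneg x]
  have hmul : ‖a * x ^ 2‖ = ‖a‖ * ‖x‖ ^ 2 := by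
    rw [norm_mul, norm_pow]
  have hna : ν ≤ ‖a‖ := by nlinarith [norm_nonneg a]
  have hnx : ν ≤ ‖x‖ := by nlinarith [norm_nonneg x, sq_nonneg ‖x‖]
  have hν4 : ν ^ 4 ≤ ν := pow_le_of_le_one hν.le hν1 (by norm_num)
  have h2sq : ‖(2 : ℤ_[p])‖ ^ 2 ≤ 1 := by nlinarith
  have hkey : ‖(2 : ℤ_[p])‖ ^ 2 * ν ^ 4 ≤ ν ^ 4 :=
    mul_le_of_le_one_left (pow_nonneg hν.le 4) h2sq
  have hδν : ‖(2 : ℤ_[p])‖ ^ 2 * ν ^ 4 / 2 < ν := by linarith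
  have hna' : ν ≤ ‖a'‖ := by
    have h1 : ‖a‖ ≤ max ‖a'‖ ‖a - a'‖ := by
      have := PadicInt.nonarchimedean a' (a - a')
      simpa using this
    rw [norm_sub_rev] at h1
    rcases le_max_iff.mp h1 with h | h
    · exact hna.trans h
    · linarith
  set s : ℤ_[p] := r' - (a * x ^ 2 + r) with hs
  set F : Polynomial ℤ_[p] := C a' * X ^ 2 + C s with hF
  have heval : F.eval x = (a' - a) * x ^ 2 + (r' - r) := by
    rw [hF]; simp [hs]; ring
  have hevalnorm : ‖F.eval x‖ < ‖(2 : ℤ_[p])‖ ^ 2 * ν ^ 4 / 2 := by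
    rw [heval]
    refine lt_of_le_of_lt (PadicInt.nonarchimedean _ _) (max_lt ?_ hr)
    calc ‖(a' - a) * x ^ 2‖ = ‖a' - a‖ * ‖x‖ ^ 2 := by
          rw [norm_mul, norm_pow]
      _ ≤ ‖a' - a‖ := mul_le_of_le_one_right (norm_nonneg _) hx2
      _ < _ := ha
  have hderiv : F.derivative.eval x = 2 * a' * x := by
    rw [hF]; simp; ring
  have hdnorm : ‖(2 : ℤ_[p])‖ * ν ^ 2 ≤ ‖F.derivative.eval x‖ := by
    rw [hderiv]
    have he : ‖2 * a' * x‖ = ‖(2 : ℤ_[p])‖ * ‖a'‖ * ‖x‖ := by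
      rw [norm_mul, norm_mul]
    rw [he]
    have h1 : ν * ν ≤ ‖a'‖ * ‖x‖ := mul_le_mul hna' hnx hν.le (norm_nonneg _)
    nlinarith
  have hhyp : ‖F.eval x‖ < ‖F.derivative.eval x‖ ^ 2 := by
    refine hevalnorm.trans_le ?_
    calc ‖(2 : ℤ_[p])‖ ^ 2 * ν ^ 4 / 2 ≤ (‖(2 : ℤ_[p])‖ * ν ^ 2) ^ 2 := by nlinarith
      _ ≤ ‖F.derivative.eval x‖ ^ 2 := pow_le_pow_left₀ (by positivity) hdnorm 2
  obtain ⟨z, hz, -⟩ := hensels_lemma hhyp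
  refine ⟨z, ?_⟩
  have hz' : a' * z ^ 2 + s = 0 := by simpa [hF] using hz
  rw [hs] at hz'
  linear_combination hz'

lemma term_norm_le {p : ℕ} [Fact p.Prime] (u w : ℤ_[p]) : ‖u * w ^ 2‖ ≤ ‖u‖ := by
  rw [norm_mul, norm_pow]
  have h1 : ‖w‖ ≤ 1 := PadicInt.norm_le_one _
  exact mul_le_of_le_one_right (norm_nonneg u) (by nlinarith [norm_nonneg w])

/-- Uniform stability of representability under perturbation of the coefficients. -/
lemma omega_stable (n : ℤ) (hn : n ≠ 0) (p : ℕ) [Fact p.Prime] :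
    ∃ δ > 0, ∀ a b c a' b' c' : ℤ_[p], ‖a' - a‖ < δ → ‖b' - b‖ < δ → ‖c' - c‖ < δ →
      (∃ x y z : ℤ_[p], a * x ^ 2 + b * y ^ 2 + c * z ^ 2 = (n : ℤ_[p])) →
      ∃ x y z : ℤ_[p], a' * x ^ 2 + b' * y ^ 2 + c' * z ^ 2 = (n : ℤ_[p]) := by
  have hn' : ((n : ℤ_[p])) ≠ 0 := by exact_mod_cast hn
  set ν : ℝ := ‖((n : ℤ_[p]))‖ with hνdef
  have hνpos : 0 < ν := norm_pos_iff.mpr hn'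
  have hν1 : ν ≤ 1 := PadicInt.norm_le_one _
  have h2pos : (0:ℝ) < ‖(2 : ℤ_[p])‖ := norm_pos_iff.mpr two_ne_zero
  refine ⟨‖(2 : ℤ_[p])‖ ^ 2 * ν ^ 4 / 2, by positivity, ?_⟩
  rintro a b c a' b' c' ha hb hc ⟨x, y, z, hxyz⟩
  have hmax : ν ≤ max ‖a * x ^ 2‖ (max ‖b * y ^ 2‖ ‖c * z ^ 2‖) := by
    have e : a * x ^ 2 + b * y ^ 2 + c * z ^ 2 = a * x ^ 2 + (b * y ^ 2 + c * z ^ 2) := by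
      ring
    calc ν = ‖a * x ^ 2 + (b * y ^ 2 + c * z ^ 2)‖ := by rw [← e, hxyz]
      _ ≤ max ‖a * x ^ 2‖ ‖b * y ^ 2 + c * z ^ 2‖ := PadicInt.nonarchimedean _ _
      _ ≤ max ‖a * x ^ 2‖ (max ‖b * y ^ 2‖ ‖c * z ^ 2‖) :=
          max_le_max le_rfl (PadicInt.nonarchimedean _ _)
  rcases le_max_iff.mp hmax with h | h
  · -- the `a` term dominates
    have hdiff : ‖(b' * y ^ 2 + c' * z ^ 2) - (b * y ^ 2 + c * z ^ 2)‖ <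
        ‖(2 : ℤ_[p])‖ ^ 2 * ν ^ 4 / 2 := by
      have e : (b' * y ^ 2 + c' * z ^ 2) - (b * y ^ 2 + c * z ^ 2)
          = (b' - b) * y ^ 2 + (c' - c) * z ^ 2 := by ring
      rw [e]
      exact lt_of_le_of_lt (PadicInt.nonarchimedean _ _)
        (max_lt (lt_of_le_of_lt (term_norm_le _ _) hb)
          (lt_of_le_of_lt (term_norm_le _ _) hc))
    obtain ⟨x', hx'⟩ := hensel_aux hνpos hν1 a a' x (b * y ^ 2 + c * z ^ 2)
      (b' * y ^ 2 + c' * z ^ 2) h ha hdiff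
    exact ⟨x', y, z, by linear_combination hx' + hxyz⟩
  rcases le_max_iff.mp h with h' | h'
  · -- the `b` term dominates
    have hdiff : ‖(a' * x ^ 2 + c' * z ^ 2) - (a * x ^ 2 + c * z ^ 2)‖ <
        ‖(2 : ℤ_[p])‖ ^ 2 * ν ^ 4 / 2 := by
      have e : (a' * x ^ 2 + c' * z ^ 2) - (a * x ^ 2 + c * z ^ 2)
          = (a' - a) * x ^ 2 + (c' - c) * z ^ 2 := by ring
      rw [e]
      exact lt_of_le_of_lt (PadicInt.nonarchimedean _ _)
        (max_lt (lt_of_le_of_lt (term_norm_le _ _) ha)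
          (lt_of_le_of_lt (term_norm_le _ _) hc))
    obtain ⟨y', hy'⟩ := hensel_aux hνpos hν1 b b' y (a * x ^ 2 + c * z ^ 2)
      (a' * x ^ 2 + c' * z ^ 2) h' hb hdiff
    exact ⟨x, y', z, by linear_combination hy' + hxyz⟩
  · -- the `c` term dominates
    have hdiff : ‖(a' * x ^ 2 + b' * y ^ 2) - (a * x ^ 2 + b * y ^ 2)‖ <
        ‖(2 : ℤ_[p])‖ ^ 2 * ν ^ 4 / 2 := by
      have e : (a' * x ^ 2 + b' * y ^ 2) - (a * x ^ 2 + b * y ^ 2)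
          = (a' - a) * x ^ 2 + (b' - b) * y ^ 2 := by ring
      rw [e]
      exact lt_of_le_of_lt (PadicInt.nonarchimedean _ _)
        (max_lt (lt_of_le_of_lt (term_norm_le _ _) ha)
          (lt_of_le_of_lt (term_norm_le _ _) hb))
    obtain ⟨z', hz'⟩ := hensel_aux hνpos hν1 c c' z (a * x ^ 2 + b * y ^ 2)
      (a' * x ^ 2 + b' * y ^ 2) h' hc hdiff
    exact ⟨x, y, z', by linear_combination hz' + hxyz⟩

/-- For every nonzero integer `n` and every prime `p`, the set `Ω_p` is clopen in
`ℤ_p³`; in particular its topological boundary is empty and has Haar measure zero. -/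
theorem stmt4 (n : ℤ) (hn : n ≠ 0) (p : ℕ) [Fact p.Prime] :
    IsOpen (Omega p n) ∧ IsClosed (Omega p n) ∧
    frontier (Omega p n) = ∅ ∧ padicHaar p (frontier (Omega p n)) = 0 := by
  obtain ⟨δ, hδ, H⟩ := omega_stable n hn p
  have key : ∀ t t' : ℤ_[p] × ℤ_[p] × ℤ_[p], dist t t' < δ →
      t ∈ Omega p n → t' ∈ Omega p n := by
    rintro ⟨a, b, c⟩ ⟨a', b', c'⟩ hdist ht
    rw [Prod.dist_eq, Prod.dist_eq] at hdist
    rcases max_lt_iff.mp hdist with ⟨h1, h23⟩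
    rcases max_lt_iff.mp h23 with ⟨h2, h3⟩
    rw [dist_eq_norm] at h1 h2 h3
    rw [norm_sub_rev] at h1 h2 h3
    exact H a b c a' b' c' h1 h2 h3 ht
  have hopen : IsOpen (Omega p n) := by
    rw [Metric.isOpen_iff]
    intro t ht
    exact ⟨δ, hδ, fun t' ht' => key t t' (by rw [dist_comm]; exact ht') ht⟩
  have hclosed : IsClosed (Omega p n) := by
    rw [← isOpen_compl_iff, Metric.isOpen_iff]
    intro t ht
    refine ⟨δ, hδ, fun t' ht' hmem => ht ?_⟩
    exact key t' t (Metric.mem_ball.mp ht') hmem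
  have hfront : frontier (Omega p n) = ∅ := (IsClopen.frontier_eq ⟨hclosed, hopen⟩)
  exact ⟨hopen, hclosed, hfront, by rw [hfront]; exact measure_empty⟩
end
end

section
/- Let $p$ be an odd prime and let $m$ be an integer with $p \nmid m$. Then the Haar probability measure on $\mathbb{Z}_p^3$ of the set of triples $(a,b,c) \in \mathbb{Z}_p^3$ such that $\min\{v_p(a), v_p(b), v_p(c)\} = 0$ and the equation $a x^2 + b y^2 + c z^2 = m$ has no solution $(x,y,z) \in \mathbb{Z}_p^3$ equals $\frac{3(p-1)}{2p^3}$. -/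
open MeasureTheory TopologicalSpace Filter
open scoped ENNReal

noncomputable section

namespace Stmt5Aux

open Polynomial

variable {p : ℕ} [Fact p.Prime]

lemma toZMod_eq_zero_iff (a : ℤ_[p]) : PadicInt.toZMod a = 0 ↔ (p : ℤ_[p]) ∣ a := by
  rw [← RingHom.mem_ker, PadicInt.ker_toZMod, PadicInt.maximalIdeal_eq_span_p,
    Ideal.mem_span_singleton]

lemma norm_eq_one_of_toZMod_ne_zero {a : ℤ_[p]} (h : PadicInt.toZMod a ≠ 0) : ‖a‖ = 1 := by
  have h2 : ¬ ‖a‖ < 1 := by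
    rw [PadicInt.norm_lt_one_iff_dvd, ← toZMod_eq_zero_iff]; exact h
  exact le_antisymm (PadicInt.norm_le_one a) (not_lt.1 h2)

lemma two_ne_zero' (hp2 : p ≠ 2) : (2 : ZMod p) ≠ 0 := by
  have : ((2 : ℕ) : ZMod p) ≠ 0 := by
    rw [Ne, ZMod.natCast_eq_zero_iff]
    intro h
    exact hp2 ((Nat.prime_dvd_prime_iff_eq (Fact.out) Nat.prime_two).1 h)
  simpa using this

lemma exists_sq_eq (hp2 : p ≠ 2) {u : ℤ_[p]} {w : ZMod p} (hw : w ≠ 0)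
    (hu : PadicInt.toZMod u = w ^ 2) : ∃ s : ℤ_[p], s ^ 2 = u := by
  set x₁ : ℤ_[p] := ((w.val : ℕ) : ℤ_[p]) with hx₁def
  have hx₁ : PadicInt.toZMod x₁ = w := by
    rw [hx₁def, map_natCast, ZMod.natCast_zmod_val]
  set F : Polynomial ℤ_[p] := X ^ 2 - C u with hF
  have heval : F.eval x₁ = x₁ ^ 2 - u := by simp [hF]
  have hnorm1 : ‖F.eval x₁‖ < 1 := by
    rw [heval, PadicInt.norm_lt_one_iff_dvd, ← toZMod_eq_zero_iff, map_sub, map_pow, hx₁, hu,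
      sub_self]
  have hderiv : F.derivative.eval x₁ = 2 * x₁ := by
    simp [hF]
    exact Or.inl one_add_one_eq_two
  have hnd : ‖F.derivative.eval x₁‖ = 1 := by
    rw [hderiv, norm_mul, norm_eq_one_of_toZMod_ne_zero (a := (2:ℤ_[p])) (by
      rw [show PadicInt.toZMod (2 : ℤ_[p]) = (2 : ZMod p) from map_ofNat _ 2]
      exact two_ne_zero' hp2),
      norm_eq_one_of_toZMod_ne_zero (hx₁ ▸ hw), one_mul]
  have hlt : ‖F.eval x₁‖ < ‖F.derivative.eval x₁‖ ^ 2 := by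
    rw [hnd]; simpa using hnorm1
  obtain ⟨z, hz, -⟩ := hensels_lemma hlt
  refine ⟨z, ?_⟩
  have : z ^ 2 - u = 0 := by simpa [hF] using hz
  exact sub_eq_zero.1 this

lemma exists_modp (hp2 : p ≠ 2) {A B M : ZMod p} (hA : A ≠ 0) (hB : B ≠ 0) :
    ∃ x y : ZMod p, A * x ^ 2 + B * y ^ 2 = M := by
  have hcard : Fintype.card (ZMod p) % 2 = 1 := by
    rw [ZMod.card]
    exact Nat.odd_iff.1 ((Fact.out : p.Prime).odd_of_ne_two hp2)
  obtain ⟨x, y, hxy⟩ := FiniteField.exists_root_sum_quadratic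
    (f := C A * X ^ 2 + C 0 * X + C (-M)) (g := C B * X ^ 2 + C 0 * X + C 0)
    (degree_quadratic hA) (degree_quadratic hB) hcard
  refine ⟨x, y, ?_⟩
  simp only [eval_add, eval_mul, eval_pow, eval_C, eval_X, zero_mul, add_zero, zero_add] at hxy
  linear_combination hxy

lemma exists_solution_aux (hp2 : p ≠ 2) {a d : ℤ_[p]} (ha : PadicInt.toZMod a ≠ 0) {w : ZMod p}
    (hw : w ≠ 0) (hd : PadicInt.toZMod d = PadicInt.toZMod a * w ^ 2) :
    ∃ x : ℤ_[p], a * x ^ 2 = d := by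
  have hu : IsUnit a := PadicInt.isUnit_iff.2 (norm_eq_one_of_toZMod_ne_zero ha)
  set u : ℤ_[p] := (↑hu.unit⁻¹ : ℤ_[p]) * d with hudef
  have h2 : PadicInt.toZMod u = w ^ 2 := by
    rw [hudef, map_mul, hd, ← mul_assoc, ← map_mul, IsUnit.val_inv_mul, map_one, one_mul]
  obtain ⟨s, hs⟩ := exists_sq_eq hp2 hw h2
  refine ⟨s, ?_⟩
  rw [hs, hudef, ← mul_assoc, IsUnit.mul_val_inv, one_mul]

lemma two_units_solvable (hp2 : p ≠ 2) {a b : ℤ_[p]} {m : ℤ} (hm : (m : ZMod p) ≠ 0)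
    (ha : PadicInt.toZMod a ≠ 0) (hb : PadicInt.toZMod b ≠ 0) :
    ∃ x y : ℤ_[p], a * x ^ 2 + b * y ^ 2 = (m : ℤ_[p]) := by
  obtain ⟨x₀, y₀, hxy⟩ := exists_modp (M := (m : ZMod p)) hp2 ha hb
  by_cases hx₀ : x₀ = 0
  · have hy₀ : y₀ ≠ 0 := by
      rintro rfl
      rw [hx₀] at hxy
      simp at hxy
      exact hm hxy.symm
    have hd : PadicInt.toZMod ((m : ℤ_[p])) = PadicInt.toZMod b * y₀ ^ 2 := by
      rw [map_intCast, ← hxy, hx₀]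
      ring
    obtain ⟨y, hy⟩ := exists_solution_aux hp2 hb hy₀ hd
    exact ⟨0, y, by simpa using hy⟩
  · set y : ℤ_[p] := ((y₀.val : ℕ) : ℤ_[p]) with hydef
    have hy : PadicInt.toZMod y = y₀ := by rw [hydef, map_natCast, ZMod.natCast_zmod_val]
    have hd : PadicInt.toZMod ((m : ℤ_[p]) - b * y ^ 2) = PadicInt.toZMod a * x₀ ^ 2 := by
      rw [map_sub, map_mul, map_pow, hy, map_intCast, ← hxy]
      ring
    obtain ⟨x, hx⟩ := exists_solution_aux hp2 ha hx₀ hd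
    exact ⟨x, y, by rw [hx]; ring⟩

lemma one_unit_solvable (hp2 : p ≠ 2) {a : ℤ_[p]} {m : ℤ} (hm : (m : ZMod p) ≠ 0)
    (ha : PadicInt.toZMod a ≠ 0)
    (hsq : IsSquare ((m : ZMod p) * (PadicInt.toZMod a)⁻¹)) :
    ∃ x : ℤ_[p], a * x ^ 2 = (m : ℤ_[p]) := by
  obtain ⟨r, hr⟩ := hsq
  have hr0 : r ≠ 0 := by
    rintro rfl
    rw [mul_zero] at hr
    exact (mul_ne_zero hm (inv_ne_zero ha)) hr
  have hd : PadicInt.toZMod ((m : ℤ_[p])) = PadicInt.toZMod a * r ^ 2 := by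
    rw [map_intCast, pow_two, ← hr]
    field_simp
  exact exists_solution_aux hp2 ha hr0 hd

def Bad (m : ℤ) (v : ZMod p × ZMod p × ZMod p) : Prop :=
  (v.1 ≠ 0 ∧ v.2.1 = 0 ∧ v.2.2 = 0 ∧ ¬ IsSquare ((m : ZMod p) * v.1⁻¹)) ∨
  (v.2.1 ≠ 0 ∧ v.1 = 0 ∧ v.2.2 = 0 ∧ ¬ IsSquare ((m : ZMod p) * v.2.1⁻¹)) ∨
  (v.2.2 ≠ 0 ∧ v.1 = 0 ∧ v.2.1 = 0 ∧ ¬ IsSquare ((m : ZMod p) * v.2.2⁻¹))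

lemma mem_iff (hp2 : p ≠ 2) {m : ℤ} (hm : (m : ZMod p) ≠ 0) (t : ℤ_[p] × ℤ_[p] × ℤ_[p]) :
    (¬((p : ℤ_[p]) ∣ t.1 ∧ (p : ℤ_[p]) ∣ t.2.1 ∧ (p : ℤ_[p]) ∣ t.2.2) ∧
      ¬ ∃ x y z : ℤ_[p], t.1 * x ^ 2 + t.2.1 * y ^ 2 + t.2.2 * z ^ 2 = (m : ℤ_[p])) ↔
    Bad m (PadicInt.toZMod t.1, PadicInt.toZMod t.2.1, PadicInt.toZMod t.2.2) := by
  obtain ⟨a, b, c⟩ := t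
  set A := PadicInt.toZMod a with hAdef
  set B := PadicInt.toZMod b with hBdef
  set C := PadicInt.toZMod c with hCdef
  constructor
  · rintro ⟨hnd, hns⟩
    have hABC : ¬(A = 0 ∧ B = 0 ∧ C = 0) := by
      rintro ⟨h1, h2, h3⟩
      exact hnd ⟨(toZMod_eq_zero_iff a).1 h1, (toZMod_eq_zero_iff b).1 h2,
        (toZMod_eq_zero_iff c).1 h3⟩
    have hAB : ¬(A ≠ 0 ∧ B ≠ 0) := by
      rintro ⟨h1, h2⟩
      obtain ⟨x, y, hxy⟩ := two_units_solvable hp2 hm h1 h2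
      exact hns ⟨x, y, 0, by simpa using hxy⟩
    have hAC : ¬(A ≠ 0 ∧ C ≠ 0) := by
      rintro ⟨h1, h2⟩
      obtain ⟨x, z, hxz⟩ := two_units_solvable hp2 hm h1 h2
      exact hns ⟨x, 0, z, by simpa [add_right_comm] using hxz⟩
    have hBC : ¬(B ≠ 0 ∧ C ≠ 0) := by
      rintro ⟨h1, h2⟩
      obtain ⟨y, z, hyz⟩ := two_units_solvable hp2 hm h1 h2
      exact hns ⟨0, y, z, by simpa [add_assoc] using hyz⟩
    have hsqA : A ≠ 0 → ¬ IsSquare ((m : ZMod p) * A⁻¹) := by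
      intro h1 hsq
      obtain ⟨x, hx⟩ := one_unit_solvable hp2 hm h1 hsq
      exact hns ⟨x, 0, 0, by simpa using hx⟩
    have hsqB : B ≠ 0 → ¬ IsSquare ((m : ZMod p) * B⁻¹) := by
      intro h1 hsq
      obtain ⟨y, hy⟩ := one_unit_solvable hp2 hm h1 hsq
      exact hns ⟨0, y, 0, by simpa using hy⟩
    have hsqC : C ≠ 0 → ¬ IsSquare ((m : ZMod p) * C⁻¹) := by
      intro h1 hsq
      obtain ⟨z, hz⟩ := one_unit_solvable hp2 hm h1 hsq
      exact hns ⟨0, 0, z, by simpa using hz⟩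
    by_cases hA : A = 0 <;> by_cases hB : B = 0 <;> by_cases hC : C = 0
    · exact absurd ⟨hA, hB, hC⟩ hABC
    · exact Or.inr (Or.inr ⟨hC, hA, hB, hsqC hC⟩)
    · exact Or.inr (Or.inl ⟨hB, hA, hC, hsqB hB⟩)
    · exact absurd ⟨hB, hC⟩ hBC
    · exact Or.inl ⟨hA, hB, hC, hsqA hA⟩
    · exact absurd ⟨hA, hC⟩ hAC
    · exact absurd ⟨hA, hB⟩ hAB
    · exact absurd ⟨hA, hB⟩ hAB
  · intro hbad
    have key : ∀ x y z : ℤ_[p], a * x ^ 2 + b * y ^ 2 + c * z ^ 2 = (m : ℤ_[p]) →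
        A * (PadicInt.toZMod x) ^ 2 + B * (PadicInt.toZMod y) ^ 2 +
          C * (PadicInt.toZMod z) ^ 2 = (m : ZMod p) := by
      intro x y z hxyz
      have := congrArg (PadicInt.toZMod) hxyz
      simpa only [map_add, map_mul, map_pow, map_intCast] using this
    rcases hbad with ⟨h1, h2, h3, h4⟩ | ⟨h1, h2, h3, h4⟩ | ⟨h1, h2, h3, h4⟩ <;>
      dsimp only at h1 h2 h3 h4
    · refine ⟨fun ⟨d1, _, _⟩ => h1 ((toZMod_eq_zero_iff a).2 d1), ?_⟩
      rintro ⟨x, y, z, hxyz⟩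
      have h5 := key x y z hxyz
      rw [h2, h3] at h5
      refine h4 ⟨PadicInt.toZMod x, ?_⟩
      field_simp
      linear_combination -h5
    · refine ⟨fun ⟨_, d2, _⟩ => h1 ((toZMod_eq_zero_iff b).2 d2), ?_⟩
      rintro ⟨x, y, z, hxyz⟩
      have h5 := key x y z hxyz
      rw [h2, h3] at h5
      refine h4 ⟨PadicInt.toZMod y, ?_⟩
      field_simp
      linear_combination -h5
    · refine ⟨fun ⟨_, _, d3⟩ => h1 ((toZMod_eq_zero_iff c).2 d3), ?_⟩
      rintro ⟨x, y, z, hxyz⟩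
      have h5 := key x y z hxyz
      rw [h2, h3] at h5
      refine h4 ⟨PadicInt.toZMod z, ?_⟩
      field_simp
      linear_combination -h5

open scoped Classical in
lemma card_nonsquares (hp2 : p ≠ 2) :
    2 * ((Finset.univ.filter (fun x : ZMod p => ¬ IsSquare x)).card : ℤ) = p - 1 := by
  have hchar : ringChar (ZMod p) ≠ 2 := by
    rw [ZMod.ringChar_zmod_n]; exact hp2
  set χ := quadraticChar (ZMod p) with hχ
  have h0 : ∑ a : ZMod p, (1 - (χ a : ℤ)) = p := by
    rw [Finset.sum_sub_distrib, quadraticChar_sum_zero hchar, sub_zero, Finset.sum_const,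
      Finset.card_univ, ZMod.card, nsmul_eq_mul, mul_one]
  rw [← Finset.sum_filter_add_sum_filter_not Finset.univ (fun x : ZMod p => ¬ IsSquare x)
    (fun a => 1 - (χ a : ℤ))] at h0
  have e1 : ∑ a ∈ Finset.univ.filter (fun x : ZMod p => ¬ IsSquare x), (1 - (χ a : ℤ))
      = 2 * ((Finset.univ.filter (fun x : ZMod p => ¬ IsSquare x)).card : ℤ) := by
    rw [Finset.sum_congr rfl (g := fun _ => (2 : ℤ)) (fun a ha => by
      rw [quadraticChar_neg_one_iff_not_isSquare.2 (Finset.mem_filter.1 ha).2]; norm_num),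
      Finset.sum_const, nsmul_eq_mul, mul_comm]
  have e2 : ∑ a ∈ Finset.univ.filter (fun x : ZMod p => ¬ ¬ IsSquare x), (1 - (χ a : ℤ))
      = 1 := by
    rw [Finset.sum_congr rfl (g := fun a => if a = 0 then 1 else 0) (fun a ha => by
      by_cases h : a = 0
      · rw [h]
        rw [show χ (0 : ZMod p) = 0 from quadraticChar_zero]
        simp
      · simp only [if_neg h]
        rw [(quadraticChar_one_iff_isSquare h).2 (not_not.1 (Finset.mem_filter.1 ha).2)]
        norm_num)]
    rw [Finset.sum_ite_eq' _ (0 : ZMod p) (fun _ => (1:ℤ)), if_pos]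
    simp [IsSquare]
  rw [e1, e2] at h0
  omega

open scoped Classical in
lemma card_bad (hp2 : p ≠ 2) {m : ℤ} (hm : (m : ZMod p) ≠ 0) :
    ((Finset.univ.filter (Bad (p := p) m)).card : ℤ) * 2 = 3 * (p - 1) := by
  set M := (m : ZMod p) with hM
  have hinv : ∀ x : ZMod p, x ≠ 0 → M * (M * x⁻¹)⁻¹ = x := by
    intro x hx; field_simp
  set N := Finset.univ.filter (fun x : ZMod p => ¬ IsSquare x) with hN
  have hns_ne : ∀ x : ZMod p, ¬ IsSquare x → x ≠ 0 := by
    rintro x hsq rfl; exact hsq ⟨0, by ring⟩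
  have c1 : (Finset.univ.filter (fun v : ZMod p × ZMod p × ZMod p =>
      v.1 ≠ 0 ∧ v.2.1 = 0 ∧ v.2.2 = 0 ∧ ¬ IsSquare (M * v.1⁻¹))).card = N.card := by
    refine Finset.card_bij' (fun v _ => M * v.1⁻¹) (fun x _ => (M * x⁻¹, 0, 0)) ?_ ?_ ?_ ?_
    · intro v hv
      obtain ⟨h1, h2, h3, h4⟩ := (Finset.mem_filter.1 hv).2
      exact Finset.mem_filter.2 ⟨Finset.mem_univ _, h4⟩
    · intro x hx
      have h4 := (Finset.mem_filter.1 hx).2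
      have hx0 := hns_ne x h4
      refine Finset.mem_filter.2 ⟨Finset.mem_univ _, ?_, rfl, rfl, ?_⟩
      · exact mul_ne_zero hm (inv_ne_zero hx0)
      · rw [hinv x hx0]; exact h4
    · intro v hv
      obtain ⟨h1, h2, h3, h4⟩ := (Finset.mem_filter.1 hv).2
      exact Prod.ext (hinv v.1 h1) (Prod.ext h2.symm h3.symm)
    · intro x hx
      exact hinv x (hns_ne x (Finset.mem_filter.1 hx).2)
  have c2 : (Finset.univ.filter (fun v : ZMod p × ZMod p × ZMod p =>
      v.2.1 ≠ 0 ∧ v.1 = 0 ∧ v.2.2 = 0 ∧ ¬ IsSquare (M * v.2.1⁻¹))).card = N.card := by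
    refine Finset.card_bij' (fun v _ => M * v.2.1⁻¹) (fun x _ => (0, M * x⁻¹, 0)) ?_ ?_ ?_ ?_
    · intro v hv
      obtain ⟨h1, h2, h3, h4⟩ := (Finset.mem_filter.1 hv).2
      exact Finset.mem_filter.2 ⟨Finset.mem_univ _, h4⟩
    · intro x hx
      have h4 := (Finset.mem_filter.1 hx).2
      have hx0 := hns_ne x h4
      refine Finset.mem_filter.2 ⟨Finset.mem_univ _, ?_, rfl, rfl, ?_⟩
      · exact mul_ne_zero hm (inv_ne_zero hx0)
      · rw [hinv x hx0]; exact h4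
    · intro v hv
      obtain ⟨h1, h2, h3, h4⟩ := (Finset.mem_filter.1 hv).2
      exact Prod.ext h2.symm (Prod.ext (hinv v.2.1 h1) h3.symm)
    · intro x hx
      exact hinv x (hns_ne x (Finset.mem_filter.1 hx).2)
  have c3 : (Finset.univ.filter (fun v : ZMod p × ZMod p × ZMod p =>
      v.2.2 ≠ 0 ∧ v.1 = 0 ∧ v.2.1 = 0 ∧ ¬ IsSquare (M * v.2.2⁻¹))).card = N.card := by
    refine Finset.card_bij' (fun v _ => M * v.2.2⁻¹) (fun x _ => (0, 0, M * x⁻¹)) ?_ ?_ ?_ ?_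
    · intro v hv
      obtain ⟨h1, h2, h3, h4⟩ := (Finset.mem_filter.1 hv).2
      exact Finset.mem_filter.2 ⟨Finset.mem_univ _, h4⟩
    · intro x hx
      have h4 := (Finset.mem_filter.1 hx).2
      have hx0 := hns_ne x h4
      refine Finset.mem_filter.2 ⟨Finset.mem_univ _, ?_, rfl, rfl, ?_⟩
      · exact mul_ne_zero hm (inv_ne_zero hx0)
      · rw [hinv x hx0]; exact h4
    · intro v hv
      obtain ⟨h1, h2, h3, h4⟩ := (Finset.mem_filter.1 hv).2
      exact Prod.ext h2.symm (Prod.ext h3.symm (hinv v.2.2 h1))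
    · intro x hx
      exact hinv x (hns_ne x (Finset.mem_filter.1 hx).2)
  have hsplit : (Finset.univ.filter (Bad (p := p) m)).card
      = (Finset.univ.filter (fun v : ZMod p × ZMod p × ZMod p =>
          v.1 ≠ 0 ∧ v.2.1 = 0 ∧ v.2.2 = 0 ∧ ¬ IsSquare (M * v.1⁻¹))).card
      + (Finset.univ.filter (fun v : ZMod p × ZMod p × ZMod p =>
          v.2.1 ≠ 0 ∧ v.1 = 0 ∧ v.2.2 = 0 ∧ ¬ IsSquare (M * v.2.1⁻¹))).card
      + (Finset.univ.filter (fun v : ZMod p × ZMod p × ZMod p =>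
          v.2.2 ≠ 0 ∧ v.1 = 0 ∧ v.2.1 = 0 ∧ ¬ IsSquare (M * v.2.2⁻¹))).card := by
    rw [show (Finset.univ.filter (Bad (p := p) m))
        = (Finset.univ.filter (fun v : ZMod p × ZMod p × ZMod p =>
            v.1 ≠ 0 ∧ v.2.1 = 0 ∧ v.2.2 = 0 ∧ ¬ IsSquare (M * v.1⁻¹))
          ∪ Finset.univ.filter (fun v : ZMod p × ZMod p × ZMod p =>
            v.2.1 ≠ 0 ∧ v.1 = 0 ∧ v.2.2 = 0 ∧ ¬ IsSquare (M * v.2.1⁻¹)))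
          ∪ Finset.univ.filter (fun v : ZMod p × ZMod p × ZMod p =>
            v.2.2 ≠ 0 ∧ v.1 = 0 ∧ v.2.1 = 0 ∧ ¬ IsSquare (M * v.2.2⁻¹)) from by
      ext v
      simp only [Finset.mem_filter, Finset.mem_union, Finset.mem_univ, true_and, Bad, hM]
      tauto]
    rw [Finset.card_union_of_disjoint, Finset.card_union_of_disjoint, add_assoc]
    · rw [Finset.disjoint_left]
      intro v hv hv'
      exact (Finset.mem_filter.1 hv).2.1 (Finset.mem_filter.1 hv').2.2.1
    · rw [Finset.disjoint_left]
      intro v hv hv'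
      have h := (Finset.mem_filter.1 hv').2.1
      rcases Finset.mem_union.1 hv with h' | h' <;>
        exact h (Finset.mem_filter.1 h').2.2.2.1
  rw [hsplit, c1, c2, c3]
  push_cast
  linarith [card_nonsquares (p := p) hp2]

def red (t : ℤ_[p] × ℤ_[p] × ℤ_[p]) : ZMod p × ZMod p × ZMod p :=
  (PadicInt.toZMod t.1, PadicInt.toZMod t.2.1, PadicInt.toZMod t.2.2)

lemma red_add (x y : ℤ_[p] × ℤ_[p] × ℤ_[p]) : red (x + y) = red x + red y := by
  simp [red, Prod.ext_iff]

lemma red_neg (x : ℤ_[p] × ℤ_[p] × ℤ_[p]) : red (-x) = - red x := by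
  simp [red, Prod.ext_iff]

lemma isOpen_fiber1 (A : ZMod p) : IsOpen {a : ℤ_[p] | PadicInt.toZMod a = A} := by
  have h : {a : ℤ_[p] | PadicInt.toZMod a = A} = Metric.ball ((A.val : ℕ) : ℤ_[p]) 1 := by
    ext a
    simp only [Set.mem_setOf_eq, Metric.mem_ball, dist_eq_norm]
    rw [PadicInt.norm_lt_one_iff_dvd, ← toZMod_eq_zero_iff, map_sub, map_natCast,
      ZMod.natCast_zmod_val, sub_eq_zero]
  rw [h]; exact Metric.isOpen_ball

lemma isOpen_fiber (v : ZMod p × ZMod p × ZMod p) :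
    IsOpen (red ⁻¹' {v} : Set (ℤ_[p] × ℤ_[p] × ℤ_[p])) := by
  have h : (red ⁻¹' {v} : Set (ℤ_[p] × ℤ_[p] × ℤ_[p]))
      = (Prod.fst ⁻¹' {a : ℤ_[p] | PadicInt.toZMod a = v.1})
        ∩ ((fun t : ℤ_[p] × ℤ_[p] × ℤ_[p] => t.2.1) ⁻¹' {a : ℤ_[p] | PadicInt.toZMod a = v.2.1})
        ∩ ((fun t : ℤ_[p] × ℤ_[p] × ℤ_[p] => t.2.2) ⁻¹' {a : ℤ_[p] | PadicInt.toZMod a = v.2.2}) := by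
    ext t
    simp only [Set.mem_preimage, Set.mem_singleton_iff, Set.mem_inter_iff, Set.mem_setOf_eq,
      red, Prod.ext_iff, and_assoc]
  rw [h]
  exact (((isOpen_fiber1 v.1).preimage continuous_fst).inter
    ((isOpen_fiber1 v.2.1).preimage (continuous_fst.comp continuous_snd))).inter
    ((isOpen_fiber1 v.2.2).preimage (continuous_snd.comp continuous_snd))

lemma red_surj : Function.Surjective (red (p := p)) := by
  intro v
  refine ⟨(((v.1.val : ℕ) : ℤ_[p]), ((v.2.1.val : ℕ) : ℤ_[p]), ((v.2.2.val : ℕ) : ℤ_[p])), ?_⟩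
  simp [red, Prod.ext_iff, map_natCast, ZMod.natCast_zmod_val]

end Stmt5Aux



/-- For an odd prime `p` and an integer `m` with `p ∤ m`, the Haar probability
measure of the set of triples `(a,b,c) ∈ ℤ_p³` with `min {v_p(a), v_p(b), v_p(c)} = 0`
(i.e. not all of `a`, `b`, `c` divisible by `p`) for which `a x² + b y² + c z² = m`
has no solution in `ℤ_p³` equals `3(p-1)/(2p³)`. -/
theorem stmt5 (p : ℕ) [Fact p.Prime] (hp2 : p ≠ 2) (m : ℤ) (hpm : ¬ (p : ℤ) ∣ m) :
    (padicHaar p {t : ℤ_[p] × ℤ_[p] × ℤ_[p] |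
        ¬((p : ℤ_[p]) ∣ t.1 ∧ (p : ℤ_[p]) ∣ t.2.1 ∧ (p : ℤ_[p]) ∣ t.2.2) ∧
        ¬ ∃ x y z : ℤ_[p], t.1 * x ^ 2 + t.2.1 * y ^ 2 + t.2.2 * z ^ 2 = (m : ℤ_[p])}).toReal
      = 3 * ((p : ℝ) - 1) / (2 * (p : ℝ) ^ 3) := by
  classical
  have hppos : (0 : ℝ) < p := by
    exact_mod_cast (Fact.out : p.Prime).pos
  have hmz : (m : ZMod p) ≠ 0 := by
    rw [Ne, ZMod.intCast_zmod_eq_zero_iff_dvd]; exact_mod_cast hpm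
  haveI : (padicHaar p).IsAddLeftInvariant := by
    unfold padicHaar; infer_instance
  -- all fibers of `red` have equal measure
  have hfib : ∀ v : ZMod p × ZMod p × ZMod p,
      padicHaar p (Stmt5Aux.red ⁻¹' {v})
        = padicHaar p (Stmt5Aux.red ⁻¹' ({0} : Set (ZMod p × ZMod p × ZMod p))) := by
    intro v
    obtain ⟨c, hc⟩ := Stmt5Aux.red_surj (p := p) v
    have hset : (Stmt5Aux.red ⁻¹' {v} : Set (ℤ_[p] × ℤ_[p] × ℤ_[p]))
        = (fun t => -c + t) ⁻¹' (Stmt5Aux.red ⁻¹' {0}) := by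
      ext t
      simp only [Set.mem_preimage, Set.mem_singleton_iff, Stmt5Aux.red_add, Stmt5Aux.red_neg, hc]
      rw [neg_add_eq_zero, eq_comm]
    rw [hset, measure_preimage_add]
  have htot : padicHaar p (Set.univ : Set (ℤ_[p] × ℤ_[p] × ℤ_[p])) = 1 := by
    have h := MeasureTheory.Measure.addHaarMeasure_self
      (K₀ := (⊤ : PositiveCompacts (ℤ_[p] × ℤ_[p] × ℤ_[p])))
    rw [PositiveCompacts.coe_top] at h
    unfold padicHaar
    exact h
  have hp0 : ((p : ℝ≥0∞) ^ 3) ≠ 0 := by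
    simp [(Fact.out : p.Prime).ne_zero]
  have hptop : ((p : ℝ≥0∞) ^ 3) ≠ ⊤ := by
    simp [ENNReal.pow_ne_top]
  have hsum : (p : ℝ≥0∞) ^ 3
      * padicHaar p (Stmt5Aux.red ⁻¹' ({0} : Set (ZMod p × ZMod p × ZMod p))) = 1 := by
    have hU : (Set.univ : Set (ℤ_[p] × ℤ_[p] × ℤ_[p]))
        = ⋃ v : ZMod p × ZMod p × ZMod p, Stmt5Aux.red ⁻¹' {v} := by
      ext t
      simp [Set.mem_iUnion]
    have hdisj : Pairwise (Function.onFun Disjoint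
        fun v : ZMod p × ZMod p × ZMod p => (Stmt5Aux.red ⁻¹' {v} : Set (ℤ_[p] × ℤ_[p] × ℤ_[p]))) := by
      intro v w hvw
      apply Set.disjoint_left.2
      intro t ht ht'
      exact hvw ((Set.mem_singleton_iff.1 ht).symm.trans (Set.mem_singleton_iff.1 ht'))
    rw [← htot, hU, measure_iUnion hdisj (fun v => (Stmt5Aux.isOpen_fiber v).measurableSet),
      tsum_fintype, Finset.sum_congr rfl (fun v _ => hfib v), Finset.sum_const,
      Finset.card_univ, nsmul_eq_mul]
    congr 1
    rw [show Fintype.card (ZMod p × ZMod p × ZMod p) = p ^ 3 by simp [ZMod.card]; ring]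
    push_cast
    ring
  have hμ0 : padicHaar p (Stmt5Aux.red ⁻¹' ({0} : Set (ZMod p × ZMod p × ZMod p)))
      = ((p : ℝ≥0∞) ^ 3)⁻¹ := by
    calc padicHaar p (Stmt5Aux.red ⁻¹' ({0} : Set (ZMod p × ZMod p × ZMod p)))
        = ((p : ℝ≥0∞) ^ 3)⁻¹ * ((p : ℝ≥0∞) ^ 3
            * padicHaar p (Stmt5Aux.red ⁻¹' ({0} : Set (ZMod p × ZMod p × ZMod p)))) := by
          rw [← mul_assoc, ENNReal.inv_mul_cancel hp0 hptop, one_mul]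
      _ = ((p : ℝ≥0∞) ^ 3)⁻¹ := by rw [hsum, mul_one]
  set S : Finset (ZMod p × ZMod p × ZMod p) := Finset.univ.filter (Stmt5Aux.Bad m) with hS
  have hsetEq : {t : ℤ_[p] × ℤ_[p] × ℤ_[p] |
        ¬((p : ℤ_[p]) ∣ t.1 ∧ (p : ℤ_[p]) ∣ t.2.1 ∧ (p : ℤ_[p]) ∣ t.2.2) ∧
        ¬ ∃ x y z : ℤ_[p], t.1 * x ^ 2 + t.2.1 * y ^ 2 + t.2.2 * z ^ 2 = (m : ℤ_[p])}
      = ⋃ v ∈ S, Stmt5Aux.red ⁻¹' {v} := by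
    ext t
    simp only [Set.mem_setOf_eq, Set.mem_iUnion, Set.mem_preimage, Set.mem_singleton_iff,
      hS, Finset.mem_filter, Finset.mem_univ, true_and, exists_prop]
    rw [Stmt5Aux.mem_iff hp2 hmz t]
    constructor
    · intro h
      exact ⟨Stmt5Aux.red t, h, rfl⟩
    · rintro ⟨v, hv, rfl⟩
      exact hv
  have hmeas : padicHaar p (⋃ v ∈ S, (Stmt5Aux.red ⁻¹' {v} : Set (ℤ_[p] × ℤ_[p] × ℤ_[p])))
      = (S.card : ℝ≥0∞) * ((p : ℝ≥0∞) ^ 3)⁻¹ := by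
    rw [measure_biUnion_finset ?_ (fun v _ => (Stmt5Aux.isOpen_fiber v).measurableSet)]
    · rw [Finset.sum_congr rfl (fun v _ => (hfib v).trans hμ0), Finset.sum_const, nsmul_eq_mul]
    · intro v _ w _ hvw
      apply Set.disjoint_left.2
      intro t ht ht'
      exact hvw ((Set.mem_singleton_iff.1 ht).symm.trans (Set.mem_singleton_iff.1 ht'))
  rw [hsetEq, hmeas]
  have hcardS : (S.card : ℝ) * 2 = 3 * ((p : ℝ) - 1) := by
    exact_mod_cast Stmt5Aux.card_bad hp2 hmz
  rw [ENNReal.toReal_mul, ENNReal.toReal_inv]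
  simp only [ENNReal.toReal_pow, ENNReal.toReal_natCast]
  field_simp
  linear_combination hcardS

end
end

section
/- Let $a$, $b$, $c$ be nonzero integers and let $p$ be an odd prime. Then the equation $a x^2 + b y^2 + c^2 z^2 = 1$ has a solution $(x,y,z) \in \mathbb{Z}_p^3$ if and only if $p \nmid \gcd(a,b,c)$ and the following two conditions hold: (i) if $p \mid \gcd(a,c)$ then $b$ is a quadratic residue modulo $p$; (ii) if $p \mid \gcd(b,c)$ then $a$ is a quadratic residue modulo $p$. -/
open Polynomial in
lemma hensel_sq (p : ℕ) [Fact p.Prime] (hp2 : p ≠ 2) (u r s : ℤ_[p])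
    (hu : ‖u‖ = 1) (hs : ‖s‖ = 1) (h : ‖u * s ^ 2 - r‖ < 1) :
    ∃ x : ℤ_[p], u * x ^ 2 = r := by
  have h2 : ‖(2 : ℤ_[p])‖ = 1 := by
    have hnd : ¬ ((p:ℤ) ∣ 2) := by
      rw [show (2:ℤ) = ((2:ℕ):ℤ) by norm_num, Int.natCast_dvd_natCast]
      intro hd
      exact hp2 ((Nat.prime_dvd_prime_iff_eq (Fact.out) Nat.prime_two).mp hd)
    have := (PadicInt.norm_int_lt_one_iff_dvd (2:ℤ)).not.mpr hnd
    push_cast at this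
    exact le_antisymm (PadicInt.norm_le_one _) (not_lt.mp this)
  set F : Polynomial ℤ_[p] := C u * X ^ 2 - C r with hF
  have hev : F.eval s = u * s ^ 2 - r := by simp [hF]
  have hder : F.derivative.eval s = 2 * u * s := by
    simp [hF]; ring
  have hnorm : ‖F.eval s‖ < ‖F.derivative.eval s‖ ^ 2 := by
    rw [hev, hder]
    have : ‖2 * u * s‖ = 1 := by simp [norm_mul, h2, hu, hs]
    rw [this]; simpa using h
  obtain ⟨z, hz, -⟩ := hensels_lemma hnorm
  have : F.eval z = u * z ^ 2 - r := by simp [hF]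
  rw [coe_aeval_eq_eval, this] at hz
  exact ⟨z, sub_eq_zero.mp hz⟩

lemma solve2 (a b : ℤ) (p : ℕ) [Fact p.Prime] (hp2 : p ≠ 2) (X Y : ℤ)
    (hXY : (p:ℤ) ∣ (a * X ^ 2 + b * Y ^ 2 - 1)) :
    ∃ x y : ℤ_[p], (a : ℤ_[p]) * x ^ 2 + (b : ℤ_[p]) * y ^ 2 = 1 := by
  set A : ℤ_[p] := (a : ℤ_[p])
  set B : ℤ_[p] := (b : ℤ_[p])
  set X' : ℤ_[p] := (X : ℤ_[p])
  set Y' : ℤ_[p] := (Y : ℤ_[p])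
  have hdvd : ‖A * X' ^ 2 + B * Y' ^ 2 - 1‖ < 1 := by
    rw [PadicInt.norm_lt_one_iff_dvd]
    have : ((p:ℤ) : ℤ_[p]) ∣ ((a * X ^ 2 + b * Y ^ 2 - 1 : ℤ) : ℤ_[p]) :=
      map_dvd (Int.castRingHom ℤ_[p]) hXY
    push_cast at this
    convert this using 2
  have key : ‖A * X' ^ 2‖ = 1 ∨ ‖B * Y' ^ 2‖ = 1 := by
    by_contra hcon
    push_neg at hcon
    obtain ⟨hx, hy⟩ := hcon
    have lx : ‖A * X' ^ 2‖ < 1 := lt_of_le_of_ne (PadicInt.norm_le_one _) hx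
    have ly : ‖B * Y' ^ 2‖ < 1 := lt_of_le_of_ne (PadicInt.norm_le_one _) hy
    have hs : ‖A * X' ^ 2 + B * Y' ^ 2‖ < 1 :=
      lt_of_le_of_lt (PadicInt.nonarchimedean _ _) (max_lt lx ly)
    have : (1 : ℝ) = ‖(A * X' ^ 2 + B * Y' ^ 2) - (A * X' ^ 2 + B * Y' ^ 2 - 1)‖ := by
      norm_num
    rw [sub_eq_add_neg] at this
    have hle := lt_of_le_of_lt (this ▸ PadicInt.nonarchimedean _ _)
      (max_lt hs (by rw [norm_neg]; exact hdvd))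
    linarith
  have normfact : ∀ u v : ℤ_[p], ‖u * v ^ 2‖ = 1 → ‖u‖ = 1 ∧ ‖v‖ = 1 := by
    intro u v huv
    rw [norm_mul, norm_pow] at huv
    constructor
    · refine le_antisymm (PadicInt.norm_le_one u) ?_
      nlinarith [pow_le_one₀ (norm_nonneg v) (PadicInt.norm_le_one v) (n := 2), norm_nonneg u]
    · refine le_antisymm (PadicInt.norm_le_one v) ?_
      nlinarith [PadicInt.norm_le_one u, norm_nonneg v, norm_nonneg u,
        sq_nonneg (‖v‖ - 1)]
  rcases key with hk | hk
  · obtain ⟨hu, hs⟩ := normfact _ _ hk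
    obtain ⟨x, hx⟩ := hensel_sq p hp2 A (1 - B * Y' ^ 2) X' hu hs (by
      have : A * X' ^ 2 - (1 - B * Y' ^ 2) = A * X' ^ 2 + B * Y' ^ 2 - 1 := by ring
      rw [this]; exact hdvd)
    exact ⟨x, Y', by rw [hx]; ring⟩
  · obtain ⟨hu, hs⟩ := normfact _ _ hk
    obtain ⟨y, hy⟩ := hensel_sq p hp2 B (1 - A * X' ^ 2) Y' hu hs (by
      have : B * Y' ^ 2 - (1 - A * X' ^ 2) = A * X' ^ 2 + B * Y' ^ 2 - 1 := by ring
      rw [this]; exact hdvd)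
    exact ⟨X', y, by rw [hy]; ring⟩

open Polynomial in
lemma solve_mod (a b : ℤ) (p : ℕ) [Fact p.Prime] (hp2 : p ≠ 2)
    (h1 : ¬((p:ℤ) ∣ a ∧ (p:ℤ) ∣ b))
    (h2 : (p:ℤ) ∣ a → ∃ t : ℤ, (p:ℤ) ∣ t ^ 2 - b)
    (h3 : (p:ℤ) ∣ b → ∃ t : ℤ, (p:ℤ) ∣ t ^ 2 - a) :
    ∃ X Y : ZMod p, (a : ZMod p) * X ^ 2 + (b : ZMod p) * Y ^ 2 = 1 := by
  have hcard : Fintype.card (ZMod p) % 2 = 1 := by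
    rw [ZMod.card]
    exact Nat.odd_iff.mp ((Fact.out : p.Prime).odd_of_ne_two hp2)
  by_cases hA : (a : ZMod p) = 0
  · have hpa : (p:ℤ) ∣ a := (ZMod.intCast_zmod_eq_zero_iff_dvd a p).mp hA
    have hB : (b : ZMod p) ≠ 0 := fun h =>
      h1 ⟨hpa, (ZMod.intCast_zmod_eq_zero_iff_dvd b p).mp h⟩
    obtain ⟨t, ht⟩ := h2 hpa
    have ht' : ((t:ZMod p)) ^ 2 = (b : ZMod p) := by
      have := (ZMod.intCast_zmod_eq_zero_iff_dvd _ p).mpr ht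
      push_cast at this
      linear_combination this
    have htne : (t : ZMod p) ≠ 0 := fun h => hB (by rw [← ht', h]; ring)
    refine ⟨0, (t : ZMod p)⁻¹, ?_⟩
    rw [← ht']
    field_simp
    simp
  · by_cases hBz : (b : ZMod p) = 0
    · have hpb : (p:ℤ) ∣ b := (ZMod.intCast_zmod_eq_zero_iff_dvd b p).mp hBz
      obtain ⟨t, ht⟩ := h3 hpb
      have ht' : ((t:ZMod p)) ^ 2 = (a : ZMod p) := by
        have := (ZMod.intCast_zmod_eq_zero_iff_dvd _ p).mpr ht
        push_cast at this
        linear_combination this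
      have htne : (t : ZMod p) ≠ 0 := fun h => hA (by rw [← ht', h]; ring)
      refine ⟨(t : ZMod p)⁻¹, 0, ?_⟩
      rw [← ht']
      field_simp
      simp
    · have hf : (C (a:ZMod p) * X ^ 2).degree = 2 := by compute_degree!
      have hg : (C (b:ZMod p) * X ^ 2 - C 1).degree = 2 := by compute_degree!
      obtain ⟨A, B, hAB⟩ := FiniteField.exists_root_sum_quadratic hf hg hcard
      refine ⟨A, B, ?_⟩
      simp only [eval_add, eval_sub, eval_mul, eval_pow, eval_C, eval_X] at hAB
      linear_combination hAB

/-- For nonzero integers `a`, `b`, `c` and an odd prime `p`, the equation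
`a x² + b y² + c² z² = 1` is soluble over `ℤ_p` iff `p ∤ gcd(a,b,c)` and:
(i) if `p ∣ gcd(a,c)` then `b` is a quadratic residue mod `p`;
(ii) if `p ∣ gcd(b,c)` then `a` is a quadratic residue mod `p`. -/
theorem stmt9 (a b c : ℤ) (ha : a ≠ 0) (hb : b ≠ 0) (hc : c ≠ 0)
    (p : ℕ) [Fact p.Prime] (hp2 : p ≠ 2) :
    (∃ x y z : ℤ_[p],
        (a : ℤ_[p]) * x ^ 2 + (b : ℤ_[p]) * y ^ 2 + (c : ℤ_[p]) ^ 2 * z ^ 2 = 1) ↔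
      (¬((p : ℤ) ∣ a ∧ (p : ℤ) ∣ b ∧ (p : ℤ) ∣ c) ∧
        (((p : ℤ) ∣ a ∧ (p : ℤ) ∣ c) → ∃ t : ℤ, (p : ℤ) ∣ t ^ 2 - b) ∧
        (((p : ℤ) ∣ b ∧ (p : ℤ) ∣ c) → ∃ t : ℤ, (p : ℤ) ∣ t ^ 2 - a)) := by
  constructor
  · rintro ⟨x, y, z, heq⟩
    have e := congrArg (PadicInt.toZMod) heq
    simp only [map_add, map_mul, map_pow, map_intCast, map_one] at e
    set X := PadicInt.toZMod x
    set Y := PadicInt.toZMod y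
    set Z := PadicInt.toZMod z
    refine ⟨?_, ?_, ?_⟩
    · rintro ⟨h1, h2, h3⟩
      rw [(ZMod.intCast_zmod_eq_zero_iff_dvd a p).mpr h1,
        (ZMod.intCast_zmod_eq_zero_iff_dvd b p).mpr h2,
        (ZMod.intCast_zmod_eq_zero_iff_dvd c p).mpr h3] at e
      simp at e
    · rintro ⟨h1, h3⟩
      rw [(ZMod.intCast_zmod_eq_zero_iff_dvd a p).mpr h1,
        (ZMod.intCast_zmod_eq_zero_iff_dvd c p).mpr h3] at e
      have e' : (b : ZMod p) * Y ^ 2 = 1 := by linear_combination e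
      have hY : Y ≠ 0 := by
        intro h; rw [h] at e'; simp at e'
      refine ⟨((Y⁻¹ : ZMod p).val : ℤ), ?_⟩
      rw [← ZMod.intCast_zmod_eq_zero_iff_dvd]
      push_cast
      rw [ZMod.natCast_val, ZMod.cast_id]
      field_simp
      linear_combination -e'
    · rintro ⟨h1, h3⟩
      rw [(ZMod.intCast_zmod_eq_zero_iff_dvd b p).mpr h1,
        (ZMod.intCast_zmod_eq_zero_iff_dvd c p).mpr h3] at e
      have e' : (a : ZMod p) * X ^ 2 = 1 := by linear_combination e
      have hX : X ≠ 0 := by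
        intro h; rw [h] at e'; simp at e'
      refine ⟨((X⁻¹ : ZMod p).val : ℤ), ?_⟩
      rw [← ZMod.intCast_zmod_eq_zero_iff_dvd]
      push_cast
      rw [ZMod.natCast_val, ZMod.cast_id]
      field_simp
      linear_combination -e'
  · rintro ⟨h1, h2, h3⟩
    by_cases hpc : (p : ℤ) ∣ c
    · have h1' : ¬((p:ℤ) ∣ a ∧ (p:ℤ) ∣ b) := fun ⟨ha', hb'⟩ => h1 ⟨ha', hb', hpc⟩
      have h2' : (p:ℤ) ∣ a → ∃ t : ℤ, (p:ℤ) ∣ t ^ 2 - b := fun ha' => h2 ⟨ha', hpc⟩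
      have h3' : (p:ℤ) ∣ b → ∃ t : ℤ, (p:ℤ) ∣ t ^ 2 - a := fun hb' => h3 ⟨hb', hpc⟩
      obtain ⟨X, Y, hXY⟩ := solve_mod a b p hp2 h1' h2' h3'
      have hdvd : (p:ℤ) ∣ (a * (X.val : ℤ) ^ 2 + b * (Y.val : ℤ) ^ 2 - 1) := by
        rw [← ZMod.intCast_zmod_eq_zero_iff_dvd]
        push_cast
        rw [ZMod.natCast_val, ZMod.cast_id, ZMod.natCast_val, ZMod.cast_id]
        linear_combination hXY
      obtain ⟨x, y, hxy⟩ := solve2 a b p hp2 _ _ hdvd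
      exact ⟨x, y, 0, by rw [← hxy]; ring⟩
    · have hnorm : ‖(c : ℤ_[p])‖ = 1 :=
        le_antisymm (PadicInt.norm_le_one _)
          (not_lt.mp ((PadicInt.norm_int_lt_one_iff_dvd c).not.mpr hpc))
      obtain ⟨v, hv⟩ := PadicInt.isUnit_iff.mpr hnorm
      refine ⟨0, 0, ((v⁻¹ : ℤ_[p]ˣ) : ℤ_[p]), ?_⟩
      have hv1 : (c : ℤ_[p]) * ((v⁻¹ : ℤ_[p]ˣ) : ℤ_[p]) = 1 := by
        rw [← hv, ← Units.val_mul, mul_inv_cancel, Units.val_one]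
      calc (a : ℤ_[p]) * 0 ^ 2 + (b : ℤ_[p]) * 0 ^ 2 +
          (c : ℤ_[p]) ^ 2 * ((v⁻¹ : ℤ_[p]ˣ) : ℤ_[p]) ^ 2
          = ((c : ℤ_[p]) * ((v⁻¹ : ℤ_[p]ˣ) : ℤ_[p])) ^ 2 := by ring
        _ = 1 := by rw [hv1, one_pow]
end

section
/- Let $a$, $b$, $c$ be positive integers not divisible by $3$, with $a$ and $b$ squarefree, $a \equiv 1 \pmod 8$, and $\gcd(ab, 2c) = 1$. Then the equation $9a x^2 - 3b y^2 + 16 c^2 z^2 = 1$ has a solution in $\mathbb{R}^3$ and a solution in $\mathbb{Z}_p^3$ for every prime $p$. -/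
open Polynomial

namespace Stmt10Aux

variable {p : ℕ} [hp : Fact p.Prime]

lemma toZMod_eq_zero_iff (z : ℤ_[p]) : PadicInt.toZMod z = 0 ↔ ‖z‖ < 1 := by
  rw [PadicInt.norm_lt_one_iff_dvd, ← Ideal.mem_span_singleton,
    ← PadicInt.maximalIdeal_eq_span_p, ← PadicInt.ker_toZMod, RingHom.mem_ker]

lemma norm_eq_one_of_toZMod_ne_zero {z : ℤ_[p]} (h : PadicInt.toZMod z ≠ 0) : ‖z‖ = 1 :=
  le_antisymm z.norm_le_one (not_lt.mp fun hlt => h ((toZMod_eq_zero_iff z).mpr hlt))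

lemma exists_sq_lift (hp2 : p ≠ 2) (α β : ℤ_[p]) (x₀ : ZMod p) (hx : x₀ ≠ 0)
    (hα : PadicInt.toZMod α ≠ 0)
    (h : PadicInt.toZMod α * x₀ ^ 2 = PadicInt.toZMod β) :
    ∃ x : ℤ_[p], α * x ^ 2 = β := by
  set a₀ : ℤ_[p] := (x₀.val : ℤ_[p]) with ha₀def
  have ha₀ : PadicInt.toZMod a₀ = x₀ := by
    rw [ha₀def, map_natCast]
    simp [ZMod.natCast_val, ZMod.cast_id]
  set F : Polynomial ℤ_[p] := C α * X ^ 2 - C β with hFdef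
  have hFev : ∀ z : ℤ_[p], F.eval z = α * z ^ 2 - β := by intro z; simp [hFdef]
  have hderiv : F.derivative.eval a₀ = 2 * α * a₀ := by
    simp [hFdef]; ring
  have h2 : (2 : ZMod p) ≠ 0 := by
    have : ((2 : ℕ) : ZMod p) ≠ 0 := by
      rw [Ne, ZMod.natCast_eq_zero_iff]
      exact fun hd => hp2 ((Nat.prime_dvd_prime_iff_eq hp.out Nat.prime_two).mp hd)
    simpa using this
  have hdn : ‖F.derivative.eval a₀‖ = 1 := by
    rw [hderiv]
    apply norm_eq_one_of_toZMod_ne_zero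
    rw [map_mul, map_mul, ha₀]
    refine mul_ne_zero (mul_ne_zero ?_ hα) hx
    rw [show (2 : ℤ_[p]) = ((2 : ℕ) : ℤ_[p]) by norm_num, map_natCast]
    simpa using h2
  have hnorm : ‖F.eval a₀‖ < ‖F.derivative.eval a₀‖ ^ 2 := by
    rw [hdn, one_pow, hFev, ← toZMod_eq_zero_iff]
    rw [map_sub, map_mul, map_pow, ha₀, h, sub_self]
  obtain ⟨z, hz, -⟩ := hensels_lemma hnorm
  refine ⟨z, ?_⟩
  have := hFev z
  rw [Polynomial.coe_aeval_eq_eval] at hz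
  rw [hz] at this
  exact sub_eq_zero.mp this.symm

lemma two_case {a : ℤ} (ha8 : a ≡ 1 [ZMOD 8]) : ∃ x : ℤ_[2], 9 * (a : ℤ_[2]) * x ^ 2 = 1 := by
  obtain ⟨k, hk⟩ : (8 : ℤ) ∣ 1 - a := ha8.dvd
  have hodd : ¬ (2 : ℤ) ∣ a := by
    intro h2a
    have : (2 : ℤ) ∣ 1 := by
      have h8 : (2:ℤ) ∣ 8 := by norm_num
      have := (h8.trans ⟨k, hk⟩)
      omega
    norm_num at this
  set F : Polynomial ℤ_[2] := X ^ 2 - C (a : ℤ_[2]) with hFdef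
  have hev1 : F.eval 1 = ((1 - a : ℤ) : ℤ_[2]) := by push_cast; simp [hFdef]
  have hnorm1 : ‖F.eval 1‖ ≤ (2 : ℝ)⁻¹ ^ 3 := by
    rw [hev1, hk]
    push_cast
    rw [show ((8 : ℤ_[2]) * k) = (2:ℤ_[2])^3 * k by norm_num]
    rw [norm_mul, norm_pow, show ((2:ℤ_[2])) = ((2:ℕ):ℤ_[2]) by norm_num,
      PadicInt.norm_p]
    calc ((2:ℝ)⁻¹)^3 * ‖(k : ℤ_[2])‖ ≤ ((2:ℝ)⁻¹)^3 * 1 := by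
          gcongr
          exact PadicInt.norm_le_one _
      _ = ((2:ℝ)⁻¹)^3 := by ring
  have hder : F.derivative.eval 1 = 2 := by simp [hFdef]; norm_num
  have hdn : ‖F.derivative.eval 1‖ = (2:ℝ)⁻¹ := by
    rw [hder, show ((2:ℤ_[2]) = ((2:ℕ):ℤ_[2])) by norm_num, PadicInt.norm_p]
    norm_num
  have hnorm : ‖F.eval 1‖ < ‖F.derivative.eval 1‖ ^ 2 := by
    rw [hdn]
    calc ‖F.eval 1‖ ≤ (2:ℝ)⁻¹ ^ 3 := hnorm1
      _ < (2:ℝ)⁻¹ ^ 2 := by norm_num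
  obtain ⟨u, hu, -⟩ := hensels_lemma hnorm
  have hu2 : u ^ 2 = (a : ℤ_[2]) := by
    have : u ^ 2 - (a : ℤ_[2]) = 0 := by simpa [hFdef] using hu
    exact sub_eq_zero.mp this
  have hua : ‖u‖ = 1 := by
    have hna : ‖(a : ℤ_[2])‖ = 1 := by
      refine le_antisymm (PadicInt.norm_le_one _) (not_lt.mp fun hlt => ?_)
      exact hodd ((PadicInt.norm_int_lt_one_iff_dvd a).mp hlt)
    have : ‖u‖ ^ 2 = 1 := by rw [← norm_pow, hu2, hna]
    nlinarith [norm_nonneg u]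
  have h3 : ‖(3 : ℤ_[2]) * u‖ = 1 := by
    rw [norm_mul, hua, mul_one]
    refine le_antisymm (PadicInt.norm_le_one _) (not_lt.mp fun hlt => ?_)
    have := (PadicInt.norm_int_lt_one_iff_dvd 3).mp (by simpa using hlt)
    norm_num at this
  obtain ⟨w, hw⟩ := PadicInt.isUnit_iff.mpr h3
  refine ⟨(↑w⁻¹ : ℤ_[2]), ?_⟩
  have hinv : (3 : ℤ_[2]) * u * (↑w⁻¹ : ℤ_[2]) = 1 := by
    rw [← hw, ← Units.val_mul, mul_inv_cancel, Units.val_one]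
  calc 9 * (a : ℤ_[2]) * (↑w⁻¹ : ℤ_[2]) ^ 2 = ((3:ℤ_[2]) * u * (↑w⁻¹:ℤ_[2]))^2 := by
        rw [← hu2]; ring
    _ = 1 := by rw [hinv]; norm_num

lemma exists_zmod_sol (hp2 : p ≠ 2) (A B : ZMod p)
    (hA : A ≠ 0) (hB : B ≠ 0) : ∃ x y : ZMod p, A * x ^ 2 - B * y ^ 2 = 1 := by
  have hcard : Fintype.card (ZMod p) % 2 = 1 := by
    rw [ZMod.card]
    exact (Nat.Prime.mod_two_eq_one_iff_ne_two hp.out).mpr hp2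
  have h1 : (C A * X ^ 2 : (ZMod p)[X]).degree = 2 := Polynomial.degree_C_mul_X_pow 2 hA
  have hf2 : (C A * X ^ 2 + C (-1) : (ZMod p)[X]).degree = 2 := by
    rw [Polynomial.degree_add_eq_left_of_degree_lt
      (by rw [h1]; exact lt_of_le_of_lt Polynomial.degree_C_le (by norm_num)), h1]
  have hg2 : (C (-B) * X ^ 2 : (ZMod p)[X]).degree = 2 :=
    Polynomial.degree_C_mul_X_pow 2 (neg_ne_zero.mpr hB)
  obtain ⟨x, y, hxy⟩ := FiniteField.exists_root_sum_quadratic hf2 hg2 hcard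
  refine ⟨x, y, ?_⟩
  simp only [Polynomial.eval_add, Polynomial.eval_mul, Polynomial.eval_pow,
    Polynomial.eval_C, Polynomial.eval_X] at hxy
  linear_combination hxy

end Stmt10Aux

open Stmt10Aux in
/-- Let `a`, `b`, `c` be positive integers not divisible by `3`, with `a`, `b`
squarefree, `a ≡ 1 (mod 8)` and `gcd(ab, 2c) = 1`. Then `9a x² - 3b y² + 16c² z² = 1`
is soluble over `ℝ` and over `ℤ_p` for every prime `p`. -/
theorem stmt10 (a b c : ℤ) (ha : 0 < a) (hb : 0 < b) (hc : 0 < c)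
    (ha3 : ¬ (3 : ℤ) ∣ a) (hb3 : ¬ (3 : ℤ) ∣ b) (hc3 : ¬ (3 : ℤ) ∣ c)
    (hasf : Squarefree a) (hbsf : Squarefree b)
    (ha8 : a ≡ 1 [ZMOD 8]) (hgcd : Int.gcd (a * b) (2 * c) = 1) :
    (∃ x y z : ℝ,
      9 * (a : ℝ) * x ^ 2 - 3 * (b : ℝ) * y ^ 2 + 16 * (c : ℝ) ^ 2 * z ^ 2 = 1) ∧
    (∀ (p : ℕ) [Fact p.Prime], ∃ x y z : ℤ_[p],
      9 * (a : ℤ_[p]) * x ^ 2 - 3 * (b : ℤ_[p]) * y ^ 2 + 16 * (c : ℤ_[p]) ^ 2 * z ^ 2 = 1) := by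
  constructor
  · -- real solution
    have hA : (0:ℝ) < (a:ℝ) := by exact_mod_cast ha
    refine ⟨(3 * Real.sqrt a)⁻¹, 0, 0, ?_⟩
    have hs : Real.sqrt (a:ℝ) ^ 2 = (a:ℝ) := Real.sq_sqrt hA.le
    have hs0 : Real.sqrt (a:ℝ) ≠ 0 := by positivity
    field_simp
    linear_combination (-9 : ℝ) * hs
  · intro p hpF
    by_cases hp2 : p = 2
    · subst hp2
      obtain ⟨x, hx⟩ := two_case ha8
      exact ⟨x, 0, 0, by linear_combination hx⟩
    · have hpp : Prime (p : ℤ) := Nat.prime_iff_prime_int.mp hpF.out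
      by_cases hpc : (p : ℤ) ∣ c
      · -- p ∣ c, so p ∤ 3ab
        have hpab : ¬ (p : ℤ) ∣ a * b := by
          intro hd
          have : (p : ℤ) ∣ ((Int.gcd (a*b) (2*c) : ℤ)) :=
            Int.dvd_coe_gcd hd (Dvd.dvd.mul_left hpc 2)
          rw [hgcd] at this
          have hd1 : (p : ℕ) ∣ 1 := by exact_mod_cast this
          have h2l := hpF.out.two_le
          have := Nat.le_of_dvd Nat.one_pos hd1
          omega
        have hpa : ¬ (p : ℤ) ∣ a := fun h => hpab (h.mul_right b)
        have hpb : ¬ (p : ℤ) ∣ b := fun h => hpab (h.mul_left a)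
        have hp3 : ¬ (p : ℤ) ∣ 3 := by
          intro h
          have : p ∣ 3 := by exact_mod_cast h
          have hp3' := (Nat.prime_dvd_prime_iff_eq hpF.out Nat.prime_three).mp this
          subst hp3'
          exact hc3 hpc
        set A : ZMod p := ((9 * a : ℤ) : ZMod p) with hAdef
        set B : ZMod p := ((3 * b : ℤ) : ZMod p) with hBdef
        have hA : A ≠ 0 := by
          rw [hAdef, Ne, ZMod.intCast_zmod_eq_zero_iff_dvd]
          intro h
          rcases hpp.dvd_mul.mp h with h9 | hda
          · have h33 : (p:ℤ) ∣ 3 * 3 := by rw [show (3*3:ℤ) = 9 by norm_num]; exact h9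
            rcases hpp.dvd_mul.mp h33 with h | h <;> exact hp3 h
          · exact hpa hda
        have hB : B ≠ 0 := by
          rw [hBdef, Ne, ZMod.intCast_zmod_eq_zero_iff_dvd]
          intro h
          rcases hpp.dvd_mul.mp h with h3 | hdb
          · exact hp3 h3
          · exact hpb hdb
        obtain ⟨x₀, y₀, hxy⟩ := exists_zmod_sol hp2 A B hA hB
        by_cases hx0 : x₀ = 0
        · -- -B y₀² = 1
          have hy0 : y₀ ≠ 0 := by
            intro h
            rw [hx0, h] at hxy
            simp at hxy
          have hcast : (-(3 * (b : ℤ_[p]))) = ((-(3*b) : ℤ) : ℤ_[p]) := by push_cast; ring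
          obtain ⟨y, hy⟩ := exists_sq_lift hp2 (-(3 * (b : ℤ_[p]))) 1 y₀ hy0
            (by rw [hcast, map_intCast]
                have : ((-(3*b) : ℤ) : ZMod p) = -B := by rw [hBdef]; push_cast; ring
                rw [this]; exact neg_ne_zero.mpr hB)
            (by rw [hcast, map_intCast, map_one]
                have : ((-(3*b) : ℤ) : ZMod p) = -B := by rw [hBdef]; push_cast; ring
                rw [this]
                rw [hx0] at hxy
                linear_combination hxy)
          exact ⟨0, y, 0, by linear_combination hy⟩
        · -- lift x
          set Y : ℤ_[p] := (y₀.val : ℤ_[p]) with hYdef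
          have hY : PadicInt.toZMod Y = y₀ := by
            rw [hYdef, map_natCast]
            simp [ZMod.natCast_val, ZMod.cast_id]
          have hcast : (9 * (a : ℤ_[p])) = ((9*a : ℤ) : ℤ_[p]) := by push_cast; ring
          obtain ⟨x, hx⟩ := exists_sq_lift hp2 (9 * (a : ℤ_[p]))
            (3 * (b : ℤ_[p]) * Y ^ 2 + 1) x₀ hx0
            (by rw [hcast, map_intCast]; exact hA)
            (by rw [hcast, map_intCast, ← hAdef]
                have hb' : PadicInt.toZMod (3 * (b : ℤ_[p])) = B := by
                  rw [show (3 * (b : ℤ_[p])) = ((3*b : ℤ) : ℤ_[p]) by push_cast; ring,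
                    map_intCast, hBdef]
                rw [map_add, map_mul, map_pow, hb', hY, map_one]
                linear_combination hxy)
          exact ⟨x, Y, 0, by linear_combination hx⟩
      · -- p ∤ 2c : invert 4c
        have hcast : (16 * (c : ℤ_[p]) ^ 2) = (4 * (c : ℤ_[p])) ^ 2 := by ring
        set t : ZMod p := PadicInt.toZMod (4 * (c : ℤ_[p])) with htdef
        have ht : t ≠ 0 := by
          rw [htdef, show (4 * (c : ℤ_[p])) = ((4*c : ℤ) : ℤ_[p]) by push_cast; ring,
            map_intCast, Ne, ZMod.intCast_zmod_eq_zero_iff_dvd]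
          intro h
          rcases hpp.dvd_mul.mp h with h4 | hdc
          · have h22 : (p:ℤ) ∣ 2 * 2 := by rw [show (2*2:ℤ) = 4 by norm_num]; exact h4
            rcases hpp.dvd_mul.mp h22 with h | h <;>
            · have : p ∣ 2 := by exact_mod_cast h
              exact hp2 ((Nat.prime_dvd_prime_iff_eq hpF.out Nat.prime_two).mp this)
          · exact hpc hdc
        obtain ⟨z, hz⟩ := exists_sq_lift hp2 (16 * (c : ℤ_[p]) ^ 2) 1 t⁻¹ (inv_ne_zero ht)
          (by rw [hcast, map_pow, ← htdef]; exact pow_ne_zero 2 ht)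
          (by rw [hcast, map_pow, ← htdef, map_one, ← mul_pow, mul_inv_cancel₀ ht, one_pow])
        exact ⟨0, 0, z, by linear_combination hz⟩
end
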